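/- arXiv:1210.7420 — 6 statements merged into one kernel-verified Lean document; each statement's English description precedes it below -/
import Mathlib

section
/- Let φ be a ONE-IN-THREE 3SAT instance over n variables and let t : ℝⁿ → ℝ be the associated quartic trigonometric polynomial. Then t(x) ≥ 0 for all x ∈ ℝⁿ, and t(x) = 0 if and only if sin(x_i) ∈ {0,1} for every i and the assignment b with b i = sin(x_i) one-in-three-satisfies φ. -/
noncomputable section

open Real Set Filter

/-- A literal: a variable index together with a sign (`true` = the variable itself,
`false` = its negation). -/
abbrev Lit (n : ℕ) := Fin n × Bool

/-- A clause of a ONE-IN-THREE 3SAT instance: a triple of literals. -/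
abbrev Clause3 (n : ℕ) := Lit n × Lit n × Lit n

/-- Value of a literal under a real assignment `b`. -/
def litVal {n : ℕ} (b : Fin n → ℝ) (l : Lit n) : ℝ :=
  if l.2 then b l.1 else 1 - b l.1

/-- Sum of the three literal values of a clause under a real assignment `b`. -/
def clauseVal {n : ℕ} (b : Fin n → ℝ) (c : Clause3 n) : ℝ :=
  litVal b c.1 + litVal b c.2.1 + litVal b c.2.2

/-- A boolean assignment viewed as a `{0,1}`-valued real assignment. -/
def boolToReal {n : ℕ} (b : Fin n → Bool) : Fin n → ℝ := fun i => if b i then 1 else 0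

/-- `b` one-in-three-satisfies `φ`: in every clause the three literal values sum to `1`. -/
def OneInThreeSat {n : ℕ} (b : Fin n → Bool) (φ : List (Clause3 n)) : Prop :=
  ∀ c ∈ φ, clauseVal (boolToReal b) c = 1

/-- The quartic trigonometric polynomial `t` associated with the instance `φ`. -/
def tPoly {n : ℕ} (φ : List (Clause3 n)) (x : EuclideanSpace ℝ (Fin n)) : ℝ :=
  (∑ i : Fin n, Real.sin (x i) ^ 2 * (1 - Real.sin (x i)) ^ 2)
    + (φ.map (fun c => (clauseVal (fun i => Real.sin (x i)) c - 1) ^ 2)).sum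

lemma list_sum_zero_of_nonneg {l : List ℝ} (h : ∀ a ∈ l, 0 ≤ a) (hs : l.sum = 0) :
    ∀ a ∈ l, a = 0 := by
  induction l with
  | nil => simp
  | cons b t ih =>
    simp only [List.sum_cons] at hs
    have hb := h b List.mem_cons_self
    have ht : 0 ≤ t.sum := List.sum_nonneg fun a ha => h a (List.mem_cons_of_mem _ ha)
    have hb0 : b = 0 := by linarith
    have hts : t.sum = 0 := by linarith
    intro a ha
    rcases List.mem_cons.1 ha with rfl | ha
    · exact hb0
    · exact ih (fun a ha => h a (List.mem_cons_of_mem _ ha)) hts a ha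
theorem stmt0 {n : ℕ} (φ : List (Clause3 n)) :
    (∀ x : EuclideanSpace ℝ (Fin n), 0 ≤ tPoly φ x) ∧
      ∀ x : EuclideanSpace ℝ (Fin n),
        tPoly φ x = 0 ↔
          (∀ i, Real.sin (x i) = 0 ∨ Real.sin (x i) = 1) ∧
            ∀ c ∈ φ, clauseVal (fun i => Real.sin (x i)) c = 1 := by
  have h1 : ∀ x : EuclideanSpace ℝ (Fin n),
      0 ≤ ∑ i : Fin n, Real.sin (x i) ^ 2 * (1 - Real.sin (x i)) ^ 2 := fun x =>
    Finset.sum_nonneg fun i _ => mul_nonneg (sq_nonneg _) (sq_nonneg _)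
  have h2 : ∀ x : EuclideanSpace ℝ (Fin n),
      0 ≤ (φ.map (fun c => (clauseVal (fun i => Real.sin (x i)) c - 1) ^ 2)).sum := by
    intro x
    apply List.sum_nonneg
    intro a ha
    obtain ⟨c, _, rfl⟩ := List.mem_map.1 ha
    exact sq_nonneg _
  refine ⟨fun x => add_nonneg (h1 x) (h2 x), fun x => ?_⟩
  constructor
  · intro h
    have hs : ∑ i : Fin n, Real.sin (x i) ^ 2 * (1 - Real.sin (x i)) ^ 2 = 0 := by
      have := h2 x; have := h1 x; unfold tPoly at h; linarith
    have hl : (φ.map (fun c => (clauseVal (fun i => Real.sin (x i)) c - 1) ^ 2)).sum = 0 := by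
      have := h2 x; have := h1 x; unfold tPoly at h; linarith
    constructor
    · intro i
      have := (Finset.sum_eq_zero_iff_of_nonneg
        (fun i _ => mul_nonneg (sq_nonneg _) (sq_nonneg _))).1 hs i (Finset.mem_univ i)
      rcases mul_eq_zero.1 this with h' | h'
      · left; exact pow_eq_zero_iff (two_ne_zero) |>.1 h'
      · right; have := pow_eq_zero_iff (two_ne_zero) |>.1 h'; linarith
    · intro c hc
      have hmem : (clauseVal (fun i => Real.sin (x i)) c - 1) ^ 2 ∈
          φ.map (fun c => (clauseVal (fun i => Real.sin (x i)) c - 1) ^ 2) :=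
        List.mem_map.2 ⟨c, hc, rfl⟩
      have := list_sum_zero_of_nonneg (fun a ha => by
        obtain ⟨c', _, rfl⟩ := List.mem_map.1 ha
        exact sq_nonneg _) hl _ hmem
      have := pow_eq_zero_iff (two_ne_zero) |>.1 this; linarith
  · rintro ⟨hi, hc⟩
    unfold tPoly
    have hs : ∑ i : Fin n, Real.sin (x i) ^ 2 * (1 - Real.sin (x i)) ^ 2 = 0 := by
      apply Finset.sum_eq_zero
      intro i _
      rcases hi i with h | h <;> rw [h] <;> ring
    have hl : (φ.map (fun c => (clauseVal (fun i => Real.sin (x i)) c - 1) ^ 2)).sum = 0 := by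
      rw [List.sum_eq_zero]
      intro a ha
      obtain ⟨c', hc', rfl⟩ := List.mem_map.1 ha
      rw [hc c' hc']; ring
    rw [hs, hl, add_zero]
end
end

section
/- Let φ be a ONE-IN-THREE 3SAT instance over n variables and let t_h : ℝⁿ × ℝ → ℝ be the associated homogenized quartic trigonometric polynomial. Then t_h is locally positive definite if and only if no assignment b : Fin n → {0,1} one-in-three-satisfies φ. -/
noncomputable section

open Real Set Filter

/-- Homogenized value of a literal at `z = (x, y) ∈ ℝⁿ × ℝ` (coordinates `0,…,n-1` are `x`,
the last coordinate is `y`): `L_{(i,true)}(z) = sin(x_i)sin(y)` and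
`L_{(i,false)}(z) = sin²(y) − sin(x_i)sin(y)`. -/
def homLitVal {n : ℕ} (z : EuclideanSpace ℝ (Fin (n+1))) (l : Lit n) : ℝ :=
  if l.2 then Real.sin (z l.1.castSucc) * Real.sin (z (Fin.last n))
  else Real.sin (z (Fin.last n)) ^ 2 - Real.sin (z l.1.castSucc) * Real.sin (z (Fin.last n))

/-- The homogenized quartic trigonometric polynomial `t_h` associated with `φ`. -/
def tHom {n : ℕ} (φ : List (Clause3 n)) (z : EuclideanSpace ℝ (Fin (n+1))) : ℝ :=
  (∑ i : Fin n,
      Real.sin (z i.castSucc) ^ 2 * (Real.sin (z (Fin.last n)) - Real.sin (z i.castSucc)) ^ 2)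
    + (φ.map (fun c => (homLitVal z c.1 + homLitVal z c.2.1 + homLitVal z c.2.2
        - Real.sin (z (Fin.last n)) ^ 2) ^ 2)).sum

/-- Key identity: homogenized literal value at the "assignment point". -/
lemma homLitVal_eq_litVal_mul {n : ℕ} (b : Fin n → Bool)
    (z : EuclideanSpace ℝ (Fin (n+1)))
    (hzi : ∀ i : Fin n, Real.sin (z i.castSucc)
        = (if b i then (1:ℝ) else 0) * Real.sin (z (Fin.last n))) (l : Lit n) :
    homLitVal z l = litVal (boolToReal b) l * Real.sin (z (Fin.last n)) ^ 2 := by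
  rcases l with ⟨i, s⟩
  cases s <;> simp [homLitVal, litVal, boolToReal, hzi i] <;> by_cases h : b i <;>
    simp [h] <;> ring

lemma tHom_nonneg {n : ℕ} (φ : List (Clause3 n)) (z : EuclideanSpace ℝ (Fin (n+1))) :
    0 ≤ tHom φ z := by
  apply add_nonneg
  · exact Finset.sum_nonneg fun i _ => mul_nonneg (sq_nonneg _) (sq_nonneg _)
  · apply List.sum_nonneg
    intro x hx
    simp only [List.mem_map] at hx
    obtain ⟨c, -, rfl⟩ := hx
    exact sq_nonneg _

lemma coord_le_norm {n : ℕ} (z : EuclideanSpace ℝ (Fin (n+1))) (j : Fin (n+1)) :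
    |z j| ≤ ‖z‖ := by
  rw [EuclideanSpace.norm_eq]
  rw [← Real.sqrt_sq_eq_abs]
  apply Real.sqrt_le_sqrt
  calc z j ^ 2 = ‖z j‖ ^ 2 := by rw [Real.norm_eq_abs, sq_abs]
  _ ≤ ∑ i, ‖z i‖ ^ 2 :=
      Finset.single_le_sum (f := fun i => ‖z i‖ ^ 2) (fun i _ => sq_nonneg _)
        (Finset.mem_univ j)

theorem stmt1 {n : ℕ} (φ : List (Clause3 n)) :
    (∃ ε > (0:ℝ), ∀ z : EuclideanSpace ℝ (Fin (n+1)), 0 < ‖z‖ → ‖z‖ < ε → 0 < tHom φ z) ↔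
      ¬ ∃ b : Fin n → Bool, OneInThreeSat b φ := by
  constructor
  · rintro ⟨ε, hε, hpd⟩ ⟨b, hb⟩
    set δ : ℝ := ε / (2 * (n + 1)) with hδdef
    have hδpos : 0 < δ := by positivity
    set z : EuclideanSpace ℝ (Fin (n+1)) :=
      WithLp.toLp 2 (Fin.snoc (α := fun _ => ℝ) (fun i => if b i then δ else 0) δ) with hzdef
    have hzlast : z (Fin.last n) = δ := by
      rw [hzdef, WithLp.ofLp_toLp]; exact Fin.snoc_last (α := fun _ => ℝ) _ _
    have hzi : ∀ i : Fin n, z i.castSucc = if b i then δ else 0 :=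
      fun i => by rw [hzdef, WithLp.ofLp_toLp]; exact Fin.snoc_castSucc (α := fun _ => ℝ) _ _ _
    have hsin : ∀ i : Fin n, Real.sin (z i.castSucc)
        = (if b i then (1:ℝ) else 0) * Real.sin (z (Fin.last n)) := by
      intro i
      rw [hzi i, hzlast]
      by_cases h : b i <;> simp [h]
    have ht0 : tHom φ z = 0 := by
      unfold tHom
      rw [Finset.sum_eq_zero, List.sum_eq_zero, add_zero]
      · intro x hx
        simp only [List.mem_map] at hx
        obtain ⟨c, hc, rfl⟩ := hx
        rw [homLitVal_eq_litVal_mul b z hsin, homLitVal_eq_litVal_mul b z hsin,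
          homLitVal_eq_litVal_mul b z hsin]
        have h1 := hb c hc
        unfold clauseVal at h1
        linear_combination (litVal (boolToReal b) c.1 + litVal (boolToReal b) c.2.1
          + litVal (boolToReal b) c.2.2 - 1) * Real.sin (z (Fin.last n)) ^ 4 * h1
      · intro i _
        rw [hsin i]
        by_cases h : b i <;> simp [h] <;> ring
    have hznz : 0 < ‖z‖ := by
      rw [norm_pos_iff]
      intro h
      have : z (Fin.last n) = 0 := by rw [h]; rfl
      rw [hzlast] at this
      exact hδpos.ne' this
    have hzlt : ‖z‖ < ε := by
      have h1 : ‖z‖ ≤ (n + 1) * δ := by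
        rw [EuclideanSpace.norm_eq]
        rw [show ((n:ℝ) + 1) * δ = Real.sqrt (((n + 1) * δ)^2) by
          rw [Real.sqrt_sq (by positivity)]]
        apply Real.sqrt_le_sqrt
        have hbd : ∀ j : Fin (n+1), ‖z j‖ ^ 2 ≤ δ ^ 2 := by
          intro j
          rw [Real.norm_eq_abs, sq_abs]
          refine Fin.lastCases ?_ ?_ j
          · rw [hzlast]
          · intro i
            rw [hzi i]
            by_cases h : b i <;> simp [h] <;> positivity
        calc ∑ j, ‖z j‖ ^ 2 ≤ ∑ _j : Fin (n+1), δ ^ 2 :=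
              Finset.sum_le_sum fun j _ => hbd j
        _ = (n + 1) * δ ^ 2 := by
              rw [Finset.sum_const, Finset.card_univ, Fintype.card_fin, nsmul_eq_mul]
              push_cast; ring
        _ ≤ ((n + 1) * δ) ^ 2 := by nlinarith [hδpos.le, Nat.cast_nonneg (α := ℝ) n]
      have h2 : ((n:ℝ) + 1) * δ = ε / 2 := by
        rw [hδdef]; field_simp
      linarith
    exact absurd ht0 (hpd z hznz hzlt).ne'
  · intro hno
    refine ⟨π, Real.pi_pos, fun z hz hzπ => ?_⟩
    rcases lt_or_eq_of_le (tHom_nonneg φ z) with h | h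
    · exact h
    exfalso
    -- tHom φ z = 0
    have h0 : tHom φ z = 0 := h.symm
    set s := Real.sin (z (Fin.last n)) with hsdef
    have hA : 0 ≤ ∑ i : Fin n,
        Real.sin (z i.castSucc) ^ 2 * (s - Real.sin (z i.castSucc)) ^ 2 :=
      Finset.sum_nonneg fun i _ => mul_nonneg (sq_nonneg _) (sq_nonneg _)
    have hB : 0 ≤ (φ.map (fun c => (homLitVal z c.1 + homLitVal z c.2.1 + homLitVal z c.2.2
        - s ^ 2) ^ 2)).sum := by
      apply List.sum_nonneg
      intro x hx
      simp only [List.mem_map] at hx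
      obtain ⟨c, -, rfl⟩ := hx
      exact sq_nonneg _
    have hAB : (∑ i : Fin n,
        Real.sin (z i.castSucc) ^ 2 * (s - Real.sin (z i.castSucc)) ^ 2)
        + (φ.map (fun c => (homLitVal z c.1 + homLitVal z c.2.1 + homLitVal z c.2.2
        - s ^ 2) ^ 2)).sum = 0 := h0
    have hA0 : ∀ i : Fin n,
        Real.sin (z i.castSucc) ^ 2 * (s - Real.sin (z i.castSucc)) ^ 2 = 0 := by
      have hsum : (∑ i : Fin n,
          Real.sin (z i.castSucc) ^ 2 * (s - Real.sin (z i.castSucc)) ^ 2) = 0 := by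
        linarith
      intro i
      exact (Finset.sum_eq_zero_iff_of_nonneg
        (fun i _ => mul_nonneg (sq_nonneg _) (sq_nonneg _))).mp hsum i (Finset.mem_univ i)
    have hB0 : ∀ c ∈ φ, homLitVal z c.1 + homLitVal z c.2.1 + homLitVal z c.2.2 = s ^ 2 := by
      have hsum : (φ.map (fun c => (homLitVal z c.1 + homLitVal z c.2.1 + homLitVal z c.2.2
          - s ^ 2) ^ 2)).sum = 0 := by linarith
      intro c hc
      have hmem : (homLitVal z c.1 + homLitVal z c.2.1 + homLitVal z c.2.2 - s ^ 2) ^ 2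
          ∈ φ.map (fun c => (homLitVal z c.1 + homLitVal z c.2.1 + homLitVal z c.2.2
            - s ^ 2) ^ 2) := List.mem_map_of_mem hc
      have hle : (homLitVal z c.1 + homLitVal z c.2.1 + homLitVal z c.2.2 - s ^ 2) ^ 2 ≤ 0 := by
        rw [← hsum]
        apply List.single_le_sum _ _ hmem
        intro x hx
        simp only [List.mem_map] at hx
        obtain ⟨c', -, rfl⟩ := hx
        exact sq_nonneg _
      have := le_antisymm hle (sq_nonneg _)
      have := pow_eq_zero_iff (n := 2) (by norm_num) |>.mp this
      linarith
    have hcases : ∀ i : Fin n, Real.sin (z i.castSucc) = 0 ∨ Real.sin (z i.castSucc) = s := by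
      intro i
      rcases mul_eq_zero.mp (hA0 i) with h | h
      · left; exact pow_eq_zero_iff (n := 2) (by norm_num) |>.mp h
      · right
        have := pow_eq_zero_iff (n := 2) (by norm_num) |>.mp h
        linarith
    by_cases hs : s = 0
    · -- then z = 0
      have hzero : ∀ j : Fin (n+1), z j = 0 := by
        intro j
        have hb1 : |z j| < π := lt_of_le_of_lt (coord_le_norm z j) hzπ
        have hlt : -π < z j ∧ z j < π := abs_lt.mp hb1
        refine Fin.lastCases ?_ ?_ j
        · have hb1 : |z (Fin.last n)| < π :=
            lt_of_le_of_lt (coord_le_norm z (Fin.last n)) hzπ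
          have hlt := abs_lt.mp hb1
          exact (Real.sin_eq_zero_iff_of_lt_of_lt hlt.1 hlt.2).mp hs
        · intro i
          have hb1 : |z i.castSucc| < π :=
            lt_of_le_of_lt (coord_le_norm z i.castSucc) hzπ
          have hlt := abs_lt.mp hb1
          have hsin0 : Real.sin (z i.castSucc) = 0 := by
            rcases hcases i with h | h
            · exact h
            · rw [h, hs]
          exact (Real.sin_eq_zero_iff_of_lt_of_lt hlt.1 hlt.2).mp hsin0
      have : z = 0 := by ext j; simp [hzero j]
      rw [this] at hz
      simp at hz
    · -- s ≠ 0: produce satisfying assignment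
      set b : Fin n → Bool := fun i => decide (Real.sin (z i.castSucc) = s) with hbdef
      apply hno
      refine ⟨b, fun c hc => ?_⟩
      have hsin : ∀ i : Fin n, Real.sin (z i.castSucc)
          = (if b i then (1:ℝ) else 0) * s := by
        intro i
        by_cases h : Real.sin (z i.castSucc) = s
        · have hbi : b i = true := by rw [hbdef]; simp [h]
          rw [hbi, if_pos rfl, one_mul]; exact h
        · have h0 : Real.sin (z i.castSucc) = 0 := (hcases i).resolve_right h
          have hbi : b i = false := by rw [hbdef]; simp [h]
          rw [hbi]; simpa using h0
      have hl : ∀ l : Lit n, homLitVal z l = litVal (boolToReal b) l * s ^ 2 :=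
        homLitVal_eq_litVal_mul b z hsin
      have := hB0 c hc
      rw [hl c.1, hl c.2.1, hl c.2.2] at this
      have hs2 : s ^ 2 ≠ 0 := pow_ne_zero _ hs
      unfold clauseVal
      have : (litVal (boolToReal b) c.1 + litVal (boolToReal b) c.2.1
          + litVal (boolToReal b) c.2.2 - 1) * s ^ 2 = 0 := by linarith
      rcases mul_eq_zero.mp this with h' | h'
      · linarith
      · exact absurd h' hs2
end
end

section
/- Let φ be a ONE-IN-THREE 3SAT instance over n variables and let t_h : ℝⁿ × ℝ → ℝ be the associated homogenized quartic trigonometric polynomial. If no assignment b : Fin n → {0,1} one-in-three-satisfies φ, then there exists ε > 0 such that the gradient ∇t_h(z) is nonzero for every z with 0 < ‖z‖ < ε. -/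
noncomputable section

open Real Set Filter

/-- auxiliary: homogenized literal value as a function of the sine vector -/
def auxHl {n : ℕ} (w : Fin (n+1) → ℝ) (l : Lit n) : ℝ :=
  if l.2 then w l.1.castSucc * w (Fin.last n)
  else w (Fin.last n) ^ 2 - w l.1.castSucc * w (Fin.last n)

/-- auxiliary: the quartic polynomial underlying `tHom` -/
def auxQ {n : ℕ} (φ : List (Clause3 n)) (w : Fin (n+1) → ℝ) : ℝ :=
  (∑ i : Fin n, w i.castSucc ^ 2 * (w (Fin.last n) - w i.castSucc) ^ 2)
    + (φ.map (fun c => (auxHl w c.1 + auxHl w c.2.1 + auxHl w c.2.2 - w (Fin.last n) ^ 2) ^ 2)).sum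

theorem auxQ_diff {n : ℕ} (φ : List (Clause3 n)) : Differentiable ℝ (auxQ φ) := by
  unfold auxQ
  apply Differentiable.add
  · apply Differentiable.fun_sum
    intro i _
    fun_prop
  · induction φ with
    | nil => simpa using differentiable_const (0:ℝ)
    | cons c tl ih =>
      simp only [List.map_cons, List.sum_cons]
      apply Differentiable.add _ ih
      have h1 : ∀ l : Lit n, Differentiable ℝ fun w : Fin (n+1) → ℝ => auxHl w l := by
        intro l; unfold auxHl; rcases l with ⟨i, _|_⟩ <;> simp <;> fun_prop
      exact ((((h1 c.1).add (h1 c.2.1)).add (h1 c.2.2)).sub (by fun_prop)).pow 2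

theorem auxQ_smul {n : ℕ} (φ : List (Clause3 n)) (t : ℝ) (w : Fin (n+1) → ℝ) :
    auxQ φ (t • w) = t ^ 4 * auxQ φ w := by
  have hhl : ∀ l : Lit n, auxHl (t • w) l = t ^ 2 * auxHl w l := by
    intro l; unfold auxHl; rcases l with ⟨i, _|_⟩ <;> simp [Pi.smul_apply, smul_eq_mul] <;> ring
  unfold auxQ
  rw [mul_add]
  congr 1
  · rw [Finset.mul_sum]
    exact Finset.sum_congr rfl fun i _ => by simp [Pi.smul_apply, smul_eq_mul]; ring
  · induction φ with
    | nil => simp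
    | cons c tl ih =>
      simp only [List.map_cons, List.sum_cons, mul_add, ih]
      congr 1
      simp only [hhl, Pi.smul_apply, smul_eq_mul]; ring

theorem list_sum_sq_zero : ∀ (l : List ℝ), (∀ x ∈ l, 0 ≤ x) → l.sum = 0 → ∀ x ∈ l, x = 0 := by
  intro l
  induction l with
  | nil => simp
  | cons a tl ih =>
    intro hnn hs x hx
    have ha : 0 ≤ a := hnn a List.mem_cons_self
    have htl : 0 ≤ tl.sum := List.sum_nonneg fun y hy => hnn y (List.mem_cons_of_mem a hy)
    simp only [List.sum_cons] at hs
    rcases List.mem_cons.1 hx with rfl | hx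
    · linarith
    · exact ih (fun y hy => hnn y (List.mem_cons_of_mem a hy)) (by linarith) x hx

set_option maxHeartbeats 1600000 in
theorem stmt2 {n : ℕ} (φ : List (Clause3 n))
    (hunsat : ¬ ∃ b : Fin n → Bool, OneInThreeSat b φ) :
    ∃ ε > (0:ℝ), ∀ z : EuclideanSpace ℝ (Fin (n+1)),
      0 < ‖z‖ → ‖z‖ < ε → gradient (tHom φ) z ≠ 0 := by
  refine ⟨1, one_pos, fun z hz0 hz1 hg => ?_⟩
  -- coordinates are small
  have hzj : ∀ j : Fin (n+1), |z j| < 1 := by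
    intro j
    have h1 : |z j| ≤ ‖z‖ := by
      have := abs_real_inner_le_norm (EuclideanSpace.single j (1:ℝ)) z
      simpa [EuclideanSpace.inner_single_left, EuclideanSpace.norm_single] using this
    linarith
  have hpi : (3:ℝ) < π := pi_gt_three
  have hcos : ∀ j : Fin (n+1), Real.cos (z j) ≠ 0 := by
    intro j
    have h := abs_lt.1 (hzj j)
    exact ne_of_gt (Real.cos_pos_of_mem_Ioo ⟨by linarith, by linarith⟩)
  -- sine vector
  set w : Fin (n+1) → ℝ := fun j => Real.sin (z j) with hw
  -- derivative of the sine map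
  set L : EuclideanSpace ℝ (Fin (n+1)) →L[ℝ] (Fin (n+1) → ℝ) :=
    ContinuousLinearMap.pi (fun j => Real.cos (z j) • EuclideanSpace.proj j) with hL
  have hS : HasFDerivAt (fun z : EuclideanSpace ℝ (Fin (n+1)) => (fun j => Real.sin (z j))) L z := by
    apply hasFDerivAt_pi.2
    intro j
    have h1 := (EuclideanSpace.proj j : EuclideanSpace ℝ (Fin (n+1)) →L[ℝ] ℝ).hasFDerivAt (x := z)
    exact (Real.hasDerivAt_sin (z j)).comp_hasFDerivAt z h1
  set Dq : (Fin (n+1) → ℝ) →L[ℝ] ℝ := fderiv ℝ (auxQ φ) w with hDq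
  have hQfd : HasFDerivAt (auxQ φ) Dq w := (auxQ_diff φ w).hasFDerivAt
  have hcomp : HasFDerivAt (tHom φ) (Dq.comp L) z := by have := hQfd.comp z hS; exact this
  -- gradient zero gives fderiv zero
  have hfd : fderiv ℝ (tHom φ) z = 0 := by
    have : fderiv ℝ (tHom φ) z
        = (InnerProductSpace.toDual ℝ (EuclideanSpace ℝ (Fin (n+1)))) (gradient (tHom φ) z) := by
      simp [gradient]
    rw [this, hg, map_zero]
  have h0 : Dq.comp L = 0 := by rw [← hcomp.fderiv]; exact hfd
  -- Dq w = 0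
  have hDqw : Dq w = 0 := by
    set u : EuclideanSpace ℝ (Fin (n+1)) :=
      (WithLp.equiv 2 (Fin (n+1) → ℝ)).symm (fun j => Real.sin (z j) / Real.cos (z j)) with hu
    have hLu : L u = w := by
      funext j
      simp only [hL, ContinuousLinearMap.pi_apply, ContinuousLinearMap.smul_apply]
      have : (EuclideanSpace.proj j) u = Real.sin (z j) / Real.cos (z j) := rfl
      rw [this]
      simp only [hw, smul_eq_mul]
      rw [mul_comm, div_mul_cancel₀ _ (hcos j)]
    have := congrFun (congrArg (fun (T : EuclideanSpace ℝ (Fin (n+1)) →L[ℝ] ℝ) => T.toFun) h0) u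
    simpa [hLu] using this
  -- Euler relation: Dq w = 4 * auxQ φ w
  have hcurve : HasDerivAt (fun t : ℝ => t • w) w 1 := by
    simpa using (hasDerivAt_id (1:ℝ)).smul_const w
  have hg1 : HasDerivAt (fun t : ℝ => auxQ φ (t • w)) (Dq w) 1 := by
    have hQfd' : HasFDerivAt (auxQ φ) Dq ((1:ℝ) • w) := by rwa [one_smul]
    have := hQfd'.comp_hasDerivAt (1:ℝ) hcurve
    exact this
  have hg2 : HasDerivAt (fun t : ℝ => auxQ φ (t • w)) (4 * auxQ φ w) 1 := by
    have heq : (fun t : ℝ => auxQ φ (t • w)) = fun t : ℝ => t ^ 4 * auxQ φ w :=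
      funext fun t => auxQ_smul φ t w
    rw [heq]
    have := (hasDerivAt_pow 4 (1:ℝ)).mul_const (auxQ φ w)
    norm_num at this
    exact this
  have hQw0 : auxQ φ w = 0 := by
    have := hg1.unique hg2
    rw [hDqw] at this
    linarith
  -- extract zeroness of each square
  have hA : (0:ℝ) ≤ ∑ i : Fin n, w i.castSucc ^ 2 * (w (Fin.last n) - w i.castSucc) ^ 2 :=
    Finset.sum_nonneg fun i _ => by positivity
  have hB : (0:ℝ) ≤ (φ.map (fun c => (auxHl w c.1 + auxHl w c.2.1 + auxHl w c.2.2
      - w (Fin.last n) ^ 2) ^ 2)).sum := by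
    apply List.sum_nonneg
    intro x hx
    rcases List.mem_map.1 hx with ⟨c, _, rfl⟩
    positivity
  have hQsplit : (∑ i : Fin n, w i.castSucc ^ 2 * (w (Fin.last n) - w i.castSucc) ^ 2)
      + (φ.map (fun c => (auxHl w c.1 + auxHl w c.2.1 + auxHl w c.2.2
      - w (Fin.last n) ^ 2) ^ 2)).sum = 0 := hQw0
  have hA0 : ∀ i : Fin n, w i.castSucc ^ 2 * (w (Fin.last n) - w i.castSucc) ^ 2 = 0 := by
    have hsum : (∑ i : Fin n, w i.castSucc ^ 2 * (w (Fin.last n) - w i.castSucc) ^ 2) = 0 := by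
      linarith
    intro i
    exact (Finset.sum_eq_zero_iff_of_nonneg (fun i _ => by positivity)).1 hsum i (Finset.mem_univ i)
  have hB0 : ∀ c ∈ φ, (auxHl w c.1 + auxHl w c.2.1 + auxHl w c.2.2 - w (Fin.last n) ^ 2) ^ 2 = 0 := by
    have hsum : (φ.map (fun c => (auxHl w c.1 + auxHl w c.2.1 + auxHl w c.2.2
        - w (Fin.last n) ^ 2) ^ 2)).sum = 0 := by linarith
    intro c hc
    exact list_sum_sq_zero _ (fun x hx => by
        rcases List.mem_map.1 hx with ⟨c', _, rfl⟩; positivity) hsum _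
      (List.mem_map_of_mem hc)
  have hor : ∀ i : Fin n, w i.castSucc = 0 ∨ w i.castSucc = w (Fin.last n) := by
    intro i
    rcases mul_eq_zero.1 (hA0 i) with h | h
    · exact Or.inl (pow_eq_zero_iff (by norm_num) |>.1 h)
    · right
      have := pow_eq_zero_iff (n := 2) (by norm_num) |>.1 h
      linarith
  set U := w (Fin.last n) with hU
  by_cases hU0 : U = 0
  · -- all coordinates of z vanish: contradiction with 0 < ‖z‖
    have hzlast : z (Fin.last n) = 0 := by
      have h := abs_lt.1 (hzj (Fin.last n))
      exact (Real.sin_eq_zero_iff_of_lt_of_lt (by linarith) (by linarith)).1 hU0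
    have hzi : ∀ i : Fin n, z i.castSucc = 0 := by
      intro i
      have hwi : w i.castSucc = 0 := by
        rcases hor i with h | h
        · exact h
        · rw [h]; exact hU0
      have h := abs_lt.1 (hzj i.castSucc)
      exact (Real.sin_eq_zero_iff_of_lt_of_lt (by linarith) (by linarith)).1 hwi
    have : z = 0 := by
      ext j
      rcases Fin.eq_castSucc_or_eq_last j with ⟨i, rfl⟩ | rfl
      · exact hzi i
      · exact hzlast
    rw [this] at hz0
    simp at hz0
  · -- build a satisfying assignment: contradiction with hunsat
    apply hunsat
    refine ⟨fun i => decide (w i.castSucc = U), ?_⟩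
    intro c hc
    set b : Fin n → Bool := fun i => decide (w i.castSucc = U) with hb
    have key : ∀ l : Lit n, auxHl w l = U ^ 2 * litVal (boolToReal b) l := by
      rintro ⟨i, s⟩
      have hbi : boolToReal b i * U = w i.castSucc := by
        simp only [boolToReal, hb]
        rcases hor i with h | h
        · have hne : ¬ (w i.castSucc = U) := by rw [h]; exact fun hh => hU0 hh.symm
          simp [hne, h]
          exact fun hh => hh.symm
        · simp [h]
      cases s
      · simp only [auxHl, litVal, Bool.false_eq_true, if_false, ← hU]
        rw [← hbi]; ring
      · simp only [auxHl, litVal, if_true, ← hU]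
        rw [← hbi]; ring
    have hceq : auxHl w c.1 + auxHl w c.2.1 + auxHl w c.2.2 - U ^ 2 = 0 := by
      have := hB0 c hc
      exact pow_eq_zero_iff (n := 2) (by norm_num) |>.1 this
    rw [key c.1, key c.2.1, key c.2.2] at hceq
    have hU2 : (U:ℝ) ^ 2 ≠ 0 := pow_ne_zero 2 hU0
    have : U ^ 2 * (clauseVal (boolToReal b) c - 1) = 0 := by
      unfold clauseVal; ring_nf; ring_nf at hceq; linarith
    have := (mul_eq_zero.1 this).resolve_left hU2
    unfold clauseVal OneInThreeSat at *
    linarith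
end
end

section
/- Let V : ℝⁿ → ℝ be twice continuously differentiable with V(0) = 0. Then the origin is locally asymptotically stable for the gradient system ż = −∇V(z) if and only if there exists ε > 0 such that for all z with 0 < ‖z‖ < ε one has V(z) > 0 and ∇V(z) ≠ 0. -/
noncomputable section

open Real Set Filter

/-- `x` is a solution of the ODE `x' = F(x)` on the time set `I`: a differentiable curve
whose derivative at every `t ∈ I` equals `F (x t)`. -/
def IsSolutionOn {E : Type*} [NormedAddCommGroup E] [NormedSpace ℝ E]
    (F : E → E) (x : ℝ → E) (I : Set ℝ) : Prop :=
  ∀ t ∈ I, HasDerivAt x (F (x t)) t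

/-- The origin is stable in the sense of Lyapunov for `x' = F(x)`. -/
def LyapunovStable {E : Type*} [NormedAddCommGroup E] [NormedSpace ℝ E] (F : E → E) : Prop :=
  ∀ ε > (0:ℝ), ∃ δ > (0:ℝ), ∀ (T : ℝ) (x : ℝ → E),
    IsSolutionOn F x (Set.Icc 0 T) → ‖x 0‖ < δ → ∀ t ∈ Set.Icc 0 T, ‖x t‖ < ε

/-- The origin is locally attractive for `x' = F(x)`. -/
def LocallyAttractive {E : Type*} [NormedAddCommGroup E] [NormedSpace ℝ E] (F : E → E) : Prop :=
  ∃ δ > (0:ℝ), ∀ x : ℝ → E, IsSolutionOn F x (Set.Ici 0) → ‖x 0‖ < δ →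
    Filter.Tendsto x Filter.atTop (nhds 0)

/-- The origin is locally asymptotically stable for `x' = F(x)`. -/
def LAS {E : Type*} [NormedAddCommGroup E] [NormedSpace ℝ E] (F : E → E) : Prop :=
  LyapunovStable F ∧ LocallyAttractive F

section LyapAux
open Metric
variable {n : ℕ}
local notation "E" => EuclideanSpace ℝ (Fin n)

theorem fderiv_eq_toDual_gradient (V : E → ℝ) (hV : ContDiff ℝ 2 V) (z : E) :
    fderiv ℝ V z = InnerProductSpace.toDual ℝ E (gradient V z) := by
  rw [gradient, (InnerProductSpace.toDual ℝ E).apply_symm_apply]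

theorem gradV_cont (V : E → ℝ) (hV : ContDiff ℝ 2 V) : Continuous (gradient V) := by
  have : Continuous (fderiv ℝ V) := hV.continuous_fderiv (by norm_num)
  exact (InnerProductSpace.toDual ℝ E).symm.continuous.comp this

theorem chain_rule (V : E → ℝ) (hV : ContDiff ℝ 2 V) {x : ℝ → E} {v : E} {t : ℝ}
    (hx : HasDerivAt x v t) :
    HasDerivAt (fun s => V (x s)) (inner ℝ (gradient V (x t)) v : ℝ) t := by
  have hd : HasFDerivAt V (fderiv ℝ V (x t)) (x t) :=
    (hV.differentiable (by norm_num) (x t)).hasFDerivAt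
  have := hd.comp_hasDerivAt t hx
  rwa [fderiv_eq_toDual_gradient V hV, InnerProductSpace.toDual_apply_apply] at this

theorem chain_rule' (V : E → ℝ) (hV : ContDiff ℝ 2 V) {x : ℝ → E} {t : ℝ}
    (hx : HasDerivAt x (-(gradient V (x t))) t) :
    HasDerivAt (fun s => V (x s)) (-‖gradient V (x t)‖^2) t := by
  have := chain_rule V hV hx
  rwa [inner_neg_right, real_inner_self_eq_norm_sq] at this

theorem decay (V : E → ℝ) (hV : ContDiff ℝ 2 V) {x : ℝ → E} {a b μ : ℝ}
    (hx : ∀ t ∈ Icc a b, HasDerivAt x (-(gradient V (x t))) t)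
    (hμ : ∀ t ∈ Icc a b, μ ≤ ‖gradient V (x t)‖^2) :
    AntitoneOn (fun t => V (x t) + μ * t) (Icc a b) := by
  have key : ∀ t ∈ Icc a b, HasDerivAt (fun s => V (x s) + μ * s) (-‖gradient V (x t)‖^2 + μ) t :=
    fun t ht => by
      have h := (chain_rule' V hV (hx t ht)).add ((hasDerivAt_id t).const_mul μ)
      simp only [mul_one] at h; exact h
  apply antitoneOn_of_deriv_nonpos (convex_Icc a b)
  · exact fun t ht => ((key t ht).continuousAt).continuousWithinAt
  · exact fun t ht => ((key t (interior_subset ht)).differentiableAt).differentiableWithinAt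
  · intro t ht
    rw [(key t (interior_subset ht)).deriv]
    linarith [hμ t (interior_subset ht)]

theorem antitoneV (V : E → ℝ) (hV : ContDiff ℝ 2 V) {x : ℝ → E} {a b : ℝ}
    (hx : ∀ t ∈ Icc a b, HasDerivAt x (-(gradient V (x t))) t) :
    AntitoneOn (fun t => V (x t)) (Icc a b) := by
  have := decay V hV (μ := 0) hx (fun t _ => sq_nonneg _)
  simpa using this


theorem sphere_forall_zero {ε₁ : ℝ} (hε₁ : 0 < ε₁) (hs : ¬ (sphere (0:E) ε₁).Nonempty)
    (w : E) : w = 0 := by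
  by_contra hw
  refine hs ⟨(ε₁/‖w‖) • w, ?_⟩
  have hw' : ‖w‖ ≠ 0 := by simpa using hw
  simp [mem_sphere_zero_iff_norm, norm_smul, abs_of_pos (div_pos hε₁ ((norm_nonneg w).lt_of_ne' hw')),
    div_mul_cancel₀ _ hw', le_of_lt hε₁]

theorem cont_sol (V : E → ℝ) {x : ℝ → E} {a b : ℝ}
    (hx : ∀ t ∈ Icc a b, HasDerivAt x (-(gradient V (x t))) t) :
    ContinuousOn x (Icc a b) :=
  fun t ht => ((hx t ht).continuousAt).continuousWithinAt

theorem stable_of_pos (V : E → ℝ) (hV : ContDiff ℝ 2 V) (hV0 : V 0 = 0) {ε : ℝ} (hε : 0 < ε)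
    (hpos : ∀ z : E, 0 < ‖z‖ → ‖z‖ < ε → 0 < V z) :
    LyapunovStable (fun z : E => -gradient V z) := by
  intro ε₀ hε₀
  set ε₁ := min ε₀ ε / 2 with hε₁def
  have hε₁ : 0 < ε₁ := by positivity
  have hε₁ε : ε₁ < ε := by
    calc ε₁ ≤ ε / 2 := by apply div_le_div_of_nonneg_right (min_le_right _ _) <;> norm_num
    _ < ε := by linarith
  have hε₁ε₀ : ε₁ < ε₀ := by
    calc ε₁ ≤ ε₀ / 2 := by apply div_le_div_of_nonneg_right (min_le_left _ _) <;> norm_num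
    _ < ε₀ := by linarith
  by_cases hs : (sphere (0:E) ε₁).Nonempty
  · -- min of V on the sphere
    obtain ⟨w₀, hw₀S, hw₀min⟩ := (isCompact_sphere (0:E) ε₁).exists_isMinOn hs
      (hV.continuous.continuousOn)
    have hw₀ : ‖w₀‖ = ε₁ := mem_sphere_zero_iff_norm.mp hw₀S
    have hm : 0 < V w₀ := hpos w₀ (by rw [hw₀]; exact hε₁) (by rw [hw₀]; exact hε₁ε)
    -- δ from continuity of V at 0
    obtain ⟨δ', hδ', hδ'V⟩ := Metric.continuousAt_iff.mp (hV.continuous.continuousAt (x := 0)) (V w₀) hm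
    refine ⟨min δ' ε₁, by positivity, ?_⟩
    intro T x hsol hx0 t ht
    by_contra hcon
    push_neg at hcon
    have hxε₁ : ε₁ ≤ ‖x t‖ := by
      by_contra h; push_neg at h; exact absurd (h.trans hε₁ε₀) (not_lt.mpr hcon)
    have hT : 0 ≤ T := ht.1.trans ht.2
    have hsol' : ∀ s ∈ Icc (0:ℝ) T, HasDerivAt x (-(gradient V (x s))) s := hsol
    have hcont : ContinuousOn (fun s => ‖x s‖) (Icc 0 t) :=
      ((cont_sol V hsol').mono (Icc_subset_Icc_right ht.2)).norm
    have hx0' : ‖x 0‖ < ε₁ := lt_of_lt_of_le hx0 (min_le_right _ _)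
    obtain ⟨t₂, ht₂mem, ht₂⟩ := intermediate_value_Icc ht.1 hcont ⟨le_of_lt hx0', hxε₁⟩
    have hxt₂ : x t₂ ∈ sphere (0:E) ε₁ := mem_sphere_zero_iff_norm.mpr ht₂
    have hanti := antitoneV V hV hsol'
    have h1 : V (x t₂) ≤ V (x 0) :=
      hanti (left_mem_Icc.mpr hT) ⟨ht₂mem.1, ht₂mem.2.trans ht.2⟩ ht₂mem.1
    have h2 : V w₀ ≤ V (x t₂) := hw₀min hxt₂
    have h3 : V (x 0) < V w₀ := by
      have := hδ'V (show dist (x 0) 0 < δ' by simpa using lt_of_lt_of_le hx0 (min_le_left _ _))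
      rw [hV0] at this
      calc V (x 0) ≤ |V (x 0) - 0| := by rw [sub_zero]; exact le_abs_self _
      _ < V w₀ := by simpa [Real.dist_eq] using this
    linarith
  · refine ⟨1, one_pos, fun T x _ _ t _ => ?_⟩
    rw [sphere_forall_zero hε₁ hs (x t)]
    simpa using hε₀


theorem compact_inter (ε' : ℝ) {s : Set E} (hs : IsClosed s) :
    IsCompact (Metric.closedBall (0:E) ε' ∩ s) :=
  Metric.isCompact_of_isClosed_isBounded (Metric.isClosed_closedBall.inter hs)
    ((Metric.isBounded_closedBall).subset inter_subset_left)

theorem attractive_of_pos (V : E → ℝ) (hV : ContDiff ℝ 2 V) (hV0 : V 0 = 0) {ε : ℝ} (hε : 0 < ε)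
    (hpos : ∀ z : E, 0 < ‖z‖ → ‖z‖ < ε → 0 < V z ∧ gradient V z ≠ 0) :
    LocallyAttractive (fun z : E => -gradient V z) := by
  have hstab := stable_of_pos V hV hV0 hε (fun z h1 h2 => (hpos z h1 h2).1)
  obtain ⟨δ, hδ, hδprop⟩ := hstab (ε/2) (by positivity)
  have hε2 : ε/2 < ε := by linarith
  refine ⟨δ, hδ, ?_⟩
  intro x hsol hx0
  -- the trajectory stays in the ball of radius ε/2 forever
  have hball : ∀ t ≥ (0:ℝ), ‖x t‖ < ε/2 := fun t ht =>
    hδprop t x (fun s hs => hsol s (hs.1 : (0:ℝ) ≤ s)) hx0 t ⟨ht, le_refl t⟩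
  have hsol' : ∀ a b : ℝ, 0 ≤ a → ∀ s ∈ Icc a b, HasDerivAt x (-(gradient V (x s))) s :=
    fun a b ha s hs => hsol s (ha.trans hs.1)
  have hVnonneg : ∀ t ≥ (0:ℝ), 0 ≤ V (x t) := by
    intro t ht
    rcases eq_or_ne (x t) 0 with h | h
    · rw [h, hV0]
    · exact le_of_lt (hpos _ (norm_pos_iff.mpr h) ((hball t ht).trans hε2)).1
  rw [Metric.tendsto_atTop]
  intro η hη
  set η' := min η (ε/2) with hη'def
  have hη' : 0 < η' := lt_min hη (by positivity)
  set A := Metric.closedBall (0:E) (ε/2) ∩ {w | η' ≤ ‖w‖} with hAdef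
  by_cases hA : A.Nonempty
  · obtain ⟨wA, hwA, hwAmin⟩ := (compact_inter (ε/2) (isClosed_le continuous_const continuous_norm)).exists_isMinOn hA hV.continuous.continuousOn
    have hm' : 0 < V wA := (hpos wA (lt_of_lt_of_le hη' hwA.2)
      (lt_of_le_of_lt (mem_closedBall_zero_iff.mp hwA.1) hε2)).1
    set m' := V wA
    -- there is a time with V (x t₀) < m'
    have hexists : ∃ t₀ ≥ (0:ℝ), V (x t₀) < m' := by
      by_contra hcon
      push_neg at hcon
      set K := Metric.closedBall (0:E) (ε/2) ∩ {w | m' ≤ V w} with hKdef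
      have hKc : IsCompact K := compact_inter _ (isClosed_le continuous_const hV.continuous)
      have hKne : K.Nonempty := ⟨x 0, mem_closedBall_zero_iff.mpr (le_of_lt (hball 0 le_rfl)),
        hcon 0 le_rfl⟩
      obtain ⟨wK, hwK, hwKmin⟩ := hKc.exists_isMinOn hKne
        (((gradV_cont V hV).norm.pow 2).continuousOn)
      have hwK0 : wK ≠ 0 := by
        intro h
        have h2 : m' ≤ V wK := hwK.2
        rw [h, hV0] at h2
        exact absurd (lt_of_lt_of_le hm' h2) (lt_irrefl 0)
      have hμ : 0 < ‖gradient V wK‖^2 := by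
        have := (hpos wK (norm_pos_iff.mpr hwK0)
          (lt_of_le_of_lt (mem_closedBall_zero_iff.mp hwK.1) hε2)).2
        have := norm_pos_iff.mpr this
        positivity
      set μ := ‖gradient V wK‖^2
      -- on [0, T], x stays in K so V decays linearly
      have hdecay : ∀ T ≥ (0:ℝ), V (x T) + μ * T ≤ V (x 0) := by
        intro T hT
        have := decay V hV (a := 0) (b := T) (μ := μ) (hsol' 0 T le_rfl) ?_
        · have h2 := this (left_mem_Icc.mpr hT) (right_mem_Icc.mpr hT) hT
          simpa using h2
        · intro s hs
          exact hwKmin ⟨mem_closedBall_zero_iff.mpr (le_of_lt (hball s hs.1)), hcon s hs.1⟩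
      have hnn : 0 ≤ V (x 0) / μ := div_nonneg (hVnonneg 0 le_rfl) hμ.le
      have hbad := hdecay ((V (x 0))/μ + 1) (by linarith)
      have hV0' := hVnonneg ((V (x 0))/μ + 1) (by linarith)
      rw [mul_add, mul_div_cancel₀ _ (ne_of_gt hμ)] at hbad
      linarith
    obtain ⟨t₀, ht₀, hVt₀⟩ := hexists
    refine ⟨t₀, fun t ht => ?_⟩
    have hVt : V (x t) ≤ V (x t₀) :=
      antitoneV V hV (hsol' t₀ t ht₀) (left_mem_Icc.mpr ht) (right_mem_Icc.mpr ht) ht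
    have : x t ∉ A := by
      intro hmem
      exact absurd (hwAmin hmem) (not_le.mpr (lt_of_le_of_lt hVt hVt₀))
    have : ‖x t‖ < η' := by
      by_contra hge
      push_neg at hge
      exact this ⟨mem_closedBall_zero_iff.mpr (le_of_lt (hball t (ht₀.trans ht))), hge⟩
    rw [dist_zero_right]
    exact lt_of_lt_of_le this (min_le_left _ _)
  · refine ⟨0, fun t ht => ?_⟩
    rw [dist_zero_right]
    by_contra hge
    push_neg at hge
    refine hA ⟨x t, mem_closedBall_zero_iff.mpr (le_of_lt (hball t ht)), ?_⟩
    exact (min_le_left _ _).trans hge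

-- Part A : gradient nonzero near 0 from local attractivity
theorem grad_ne_near (V : E → ℝ)
    (hatt : LocallyAttractive (fun z : E => -gradient V z)) :
    ∃ r > (0:ℝ), ∀ z : E, 0 < ‖z‖ → ‖z‖ < r → gradient V z ≠ 0 := by
  obtain ⟨δ, hδ, hprop⟩ := hatt
  refine ⟨δ, hδ, fun z hz hzδ hgrad => ?_⟩
  have hsol : IsSolutionOn (fun z : E => -gradient V z) (fun _ => z) (Ici 0) := by
    intro t _
    simpa [hgrad] using hasDerivAt_const t z
  have := hprop (fun _ => z) hsol (by simpa using hzδ)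
  have hz0 : z = 0 := tendsto_nhds_unique tendsto_const_nhds this
  rw [hz0] at hz
  simp at hz

-- Part B : produce a point with strictly negative V
theorem exists_neg_V (V : E → ℝ) (hV : ContDiff ℝ 2 V) {z : E}
    (hVz : V z ≤ 0) (hgz : gradient V z ≠ 0) {ρ : ℝ} (hρ : ‖z‖ < ρ) :
    ∃ z' : E, V z' < 0 ∧ ‖z'‖ < ρ := by
  set w := gradient V z with hw
  set c : ℝ → E := fun s => z - s • w with hc
  have hc0 : c 0 = z := by simp [hc]
  have hcd : HasDerivAt c (-w) 0 := by
    have h := (hasDerivAt_const (0:ℝ) z).sub ((hasDerivAt_id (0:ℝ)).smul_const w)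
    rw [zero_sub, one_smul] at h; exact h
  have hg : HasDerivAt (fun s => V (c s)) (-‖w‖^2) 0 := by
    have := chain_rule V hV hcd
    rwa [hc0, inner_neg_right, ← hw, real_inner_self_eq_norm_sq] at this
  have hslope := hasDerivAt_iff_tendsto_slope.mp hg
  have hneg : (-‖w‖^2 : ℝ) < 0 := by
    have : 0 < ‖w‖ := norm_pos_iff.mpr hgz
    nlinarith
  have h1 : ∀ᶠ s in nhdsWithin (0:ℝ) (Ioi 0), slope (fun s => V (c s)) 0 s < 0 :=
    (hslope.mono_left (nhdsWithin_mono 0 (fun s hs => ne_of_gt hs))).eventually_lt_const hneg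
  set s₀ := (ρ - ‖z‖) / (‖w‖ + 1) with hs₀
  have hs₀pos : 0 < s₀ := by
    apply div_pos (by linarith) (by positivity)
  have h2 : ∀ᶠ s in nhdsWithin (0:ℝ) (Ioi 0), s < s₀ :=
    eventually_nhdsWithin_of_eventually_nhds (Filter.Tendsto.eventually_lt_const hs₀pos tendsto_id)
  have h3 : ∀ᶠ s in nhdsWithin (0:ℝ) (Ioi 0), s ∈ Ioi (0:ℝ) := self_mem_nhdsWithin
  obtain ⟨s, ⟨hs1, hs2⟩, hs3⟩ := ((h1.and h2).and h3).exists
  rw [slope_def_field, sub_zero, div_neg_iff] at hs1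
  have hspos : (0:ℝ) < s := hs3
  have hVc : V (c s) < V z := by
    rcases hs1 with ⟨h, h'⟩ | ⟨h, h'⟩
    · linarith
    · rw [hc0] at h; linarith
  refine ⟨c s, by linarith, ?_⟩
  calc ‖c s‖ ≤ ‖z‖ + s * ‖w‖ := by
        simpa [hc, norm_smul, abs_of_pos hspos] using norm_sub_le z (s • w)
  _ ≤ ‖z‖ + s * (‖w‖ + 1) := by nlinarith
  _ < ‖z‖ + s₀ * (‖w‖ + 1) := by
        have : (0:ℝ) < ‖w‖ + 1 := by positivity
        nlinarith
  _ = ρ := by rw [hs₀]; field_simp; ring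

-- Part C : Lipschitz bound for the vector field on a closed ball
theorem exists_lip (V : E → ℝ) (hV : ContDiff ℝ 2 V) (r : ℝ) :
    ∃ L : NNReal, LipschitzOnWith L (fun w : E => -gradient V w) (Metric.closedBall (0:E) r) := by
  have hf1 : ContDiff ℝ 1 (fderiv ℝ V) := hV.fderiv_right (by norm_num)
  have hcont : Continuous (fderiv ℝ (fderiv ℝ V)) := hf1.continuous_fderiv (by norm_num)
  obtain ⟨L₀, hL₀⟩ := (isCompact_closedBall (0:E) r).exists_bound_of_continuousOn
    (f := fderiv ℝ (fderiv ℝ V)) hcont.continuousOn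
  set L₁ : NNReal := ⟨max L₀ 0, le_max_right _ _⟩ with hL₁
  have hlip1 : LipschitzOnWith L₁ (fderiv ℝ V) (Metric.closedBall (0:E) r) := by
    apply Convex.lipschitzOnWith_of_nnnorm_hasFDerivWithin_le (𝕜 := ℝ)
      (f' := fun x => fderiv ℝ (fderiv ℝ V) x)
    · intro x _
      exact ((hf1.differentiable one_ne_zero) x).hasFDerivAt.hasFDerivWithinAt
    · intro x hx
      have : ‖fderiv ℝ (fderiv ℝ V) x‖ ≤ max L₀ 0 := (hL₀ x hx).trans (le_max_left _ _)
      exact this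
    · exact convex_closedBall _ _
  refine ⟨1 * L₁, ?_⟩
  have hiso : LipschitzWith 1 (fun d : (E →L[ℝ] ℝ) => -((InnerProductSpace.toDual ℝ E).symm d)) :=
    ((InnerProductSpace.toDual ℝ E).symm.lipschitz).neg
  have := hiso.comp_lipschitzOnWith hlip1
  convert this using 2 with w
  rfl

-- Part D : uniform-time Picard–Lindelöf step
theorem PL_step (V : E → ℝ) (hV : ContDiff ℝ 2 V) {r : ℝ} (hr : 0 < r) :
    ∃ τ > (0:ℝ), ∀ x₀ : E, ‖x₀‖ ≤ r/2 → ∀ a : ℝ,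
      ∃ φ : ℝ → E, φ a = x₀ ∧
        ∀ t ∈ Icc a (a+τ), HasDerivWithinAt φ (-(gradient V (φ t))) (Icc a (a+τ)) t := by
  obtain ⟨L, hL⟩ := exists_lip V hV r
  obtain ⟨C₀, hC₀⟩ := (isCompact_closedBall (0:E) r).exists_bound_of_continuousOn
    ((gradV_cont V hV).neg.continuousOn)
  set C := max C₀ 0 with hC
  have hCnn : 0 ≤ C := le_max_right _ _
  set τ := (r/2) / (C + 1) with hτ
  have hτpos : 0 < τ := by positivity
  refine ⟨τ, hτpos, fun x₀ hx₀ a => ?_⟩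
  have hsub : Metric.closedBall x₀ (r/2) ⊆ Metric.closedBall (0:E) r := by
    intro w hw
    rw [Metric.mem_closedBall] at *
    calc dist w 0 ≤ dist w x₀ + dist x₀ 0 := dist_triangle _ _ _
    _ ≤ r/2 + r/2 := add_le_add hw (by rwa [dist_zero_right])
    _ = r := by ring
  have hpl : IsPicardLindelof (fun (_ : ℝ) (w : E) => -gradient V w)
      (⟨a, le_refl a, by linarith⟩ : Icc a (a+τ)) x₀ ⟨r/2, by positivity⟩ 0 ⟨C, hCnn⟩ L := by
    constructor
    · exact fun t _ => hL.mono hsub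
    · exact fun x _ => continuousOn_const
    · exact fun t _ x hx => (hC₀ x (hsub hx)).trans (le_max_left _ _)
    · have : max (a + τ - a) (a - a) = τ := by
        rw [max_eq_left] <;> linarith
      show C * max (a + τ - a) (a - a) ≤ r/2 - 0
      rw [sub_zero, this, hτ]
      rw [mul_div_assoc']
      rw [div_le_iff₀ (by positivity : (0:ℝ) < C+1)]
      nlinarith
  obtain ⟨φ, hφ0, hφd⟩ := hpl.exists_eq_forall_mem_Icc_hasDerivWithinAt₀
  exact ⟨φ, hφ0, fun t ht => hφd t ht⟩

-- Part E : gluing two within-solutions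
theorem glue_sol {F : E → E} {y φ : ℝ → E} {a b : ℝ} (ha : 0 ≤ a) (hab : a ≤ b)
    (hagree : φ a = y a)
    (hy : ∀ t ∈ Icc 0 a, HasDerivWithinAt y (F (y t)) (Icc 0 a) t)
    (hφ : ∀ t ∈ Icc a b, HasDerivWithinAt φ (F (φ t)) (Icc a b) t) :
    ∀ t ∈ Icc 0 b, HasDerivWithinAt (fun t => if t ≤ a then y t else φ t)
      (F (if t ≤ a then y t else φ t)) (Icc 0 b) t := by
  set Y : ℝ → E := fun t => if t ≤ a then y t else φ t with hY
  have hYy : ∀ s ≤ a, Y s = y s := fun s hs => if_pos hs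
  have hYφ : ∀ s, a ≤ s → Y s = φ s := by
    intro s hs
    rcases eq_or_lt_of_le hs with h | h
    · simp [hY, ← h, hagree]
    · simp [hY, not_le.mpr h]
  intro t ht
  rcases lt_trichotomy t a with h | h | h
  · -- t < a
    have ht' : t ∈ Icc 0 a := ⟨ht.1, h.le⟩
    have d1 : HasDerivWithinAt Y (F (y t)) (Icc 0 a) t :=
      (hy t ht').congr (fun s hs => hYy s hs.2) (hYy t h.le)
    have hmem : Icc 0 a ∈ nhdsWithin t (Icc 0 b) :=
      mem_nhdsWithin.mpr ⟨Iio a, isOpen_Iio, h, fun w hw => ⟨hw.2.1, hw.1.le⟩⟩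
    rw [if_pos h.le]
    exact d1.mono_of_mem_nhdsWithin hmem
  · -- t = a
    subst h
    have d1 : HasDerivWithinAt Y (F (y t)) (Icc 0 b ∩ Iic t) t := by
      refine ((hy t ⟨ht.1, le_rfl⟩).mono ?_).congr (fun s hs => hYy s hs.2) (hYy t le_rfl)
      exact fun w hw => ⟨hw.1.1, hw.2⟩
    have d2 : HasDerivWithinAt Y (F (y t)) (Icc 0 b ∩ Ici t) t := by
      have : F (φ t) = F (y t) := by rw [hagree]
      refine this ▸ ((hφ t ⟨le_rfl, hab⟩).mono ?_).congr (fun s hs => hYφ s hs.2) (hYφ t le_rfl)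
      exact fun w hw => ⟨hw.2, hw.1.2⟩
    have := d1.union d2
    rw [← inter_union_distrib_left, Iic_union_Ici, inter_univ] at this
    rw [if_pos le_rfl]
    exact this
  · -- a < t
    have ht' : t ∈ Icc a b := ⟨h.le, ht.2⟩
    have d1 : HasDerivWithinAt Y (F (φ t)) (Icc 0 b ∩ Ioi a) t := by
      refine ((hφ t ht').mono ?_).congr (fun s hs => hYφ s hs.2.le) (hYφ t h.le)
      exact fun w hw => ⟨hw.2.le, hw.1.2⟩
    have hmem : Icc 0 b ∩ Ioi a ∈ nhdsWithin t (Icc 0 b) :=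
      mem_nhdsWithin.mpr ⟨Ioi a, isOpen_Ioi, h, fun w hw => ⟨hw.2, hw.1⟩⟩
    rw [if_neg (not_le.mpr h)]
    exact d1.mono_of_mem_nhdsWithin hmem

-- Part F : converting a within-solution on Icc 0 S into a genuine solution (IsSolutionOn)
theorem convert_sol {F : E → E} {y : ℝ → E} {S : ℝ} (hS : 0 < S)
    (hy : ∀ t ∈ Icc 0 S, HasDerivWithinAt y (F (y t)) (Icc 0 S) t) :
    ∃ Y : ℝ → E, (∀ t ∈ Icc 0 S, Y t = y t) ∧ IsSolutionOn F Y (Icc 0 S) := by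
  set Y : ℝ → E := fun t =>
    if t < 0 then y 0 + t • F (y 0) else if t ≤ S then y t else y S + (t - S) • F (y S) with hYdef
  have hYeq : ∀ t ∈ Icc 0 S, Y t = y t := by
    intro t ht
    simp [hYdef, not_lt.mpr ht.1, ht.2]
  refine ⟨Y, hYeq, ?_⟩
  intro t ht
  rw [hYeq t ht]
  rcases eq_or_lt_of_le ht.1 with h0 | h0
  · -- t = 0
    subst h0
    have hl : HasDerivAt (fun s : ℝ => y 0 + s • F (y 0)) (F (y 0)) 0 := by
      simpa using (hasDerivAt_id (0:ℝ)).smul_const (F (y 0))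
    have d1 : HasDerivWithinAt Y (F (y 0)) (Iic 0) 0 := by
      refine (hl.hasDerivWithinAt).congr (fun s hs => ?_) ?_
      · rcases lt_or_eq_of_le (mem_Iic.mp hs) with h | h
        · simp [hYdef, h]
        · subst h; simp [hYdef, hS.le]
      · simp [hYdef, hS.le]
    have d2 : HasDerivWithinAt Y (F (y 0)) (Ici 0) 0 := by
      have := (hy 0 ht).congr (fun s hs => hYeq s hs) (hYeq 0 ht)
      refine this.mono_of_mem_nhdsWithin (mem_nhdsWithin.mpr ⟨Iio S, isOpen_Iio, hS, fun w hw => ⟨hw.2, hw.1.le⟩⟩)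
    have := d1.union d2
    rwa [Iic_union_Ici, hasDerivWithinAt_univ] at this
  rcases eq_or_lt_of_le ht.2 with hS' | hS'
  · -- t = S
    subst hS'
    have hl : HasDerivAt (fun s : ℝ => y t + (s - t) • F (y t)) (F (y t)) t := by
      simpa using ((hasDerivAt_id t).sub_const t).smul_const (F (y t))
    have d2 : HasDerivWithinAt Y (F (y t)) (Ici t) t := by
      refine (hl.hasDerivWithinAt).congr (fun s hs => ?_) ?_
      · rcases lt_or_eq_of_le (mem_Ici.mp hs) with h | h
        · simp [hYdef, not_lt.mpr (h0.le.trans h.le), not_le.mpr h]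
        · subst h; simp [hYdef, not_lt.mpr h0.le]
      · simp [hYdef, not_lt.mpr h0.le]
    have d1 : HasDerivWithinAt Y (F (y t)) (Iic t) t := by
      have := (hy t ht).congr (fun s hs => hYeq s hs) (hYeq t ht)
      refine this.mono_of_mem_nhdsWithin (mem_nhdsWithin.mpr ⟨Ioi 0, isOpen_Ioi, h0, fun w hw => ⟨hw.1.le, hw.2⟩⟩)
    have := d1.union d2
    rwa [Iic_union_Ici, hasDerivWithinAt_univ] at this
  · -- interior
    have hmem : Icc (0:ℝ) S ∈ nhds t := Icc_mem_nhds h0 hS'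
    have := ((hy t ht).congr (fun s hs => hYeq s hs) (hYeq t ht)).hasDerivAt hmem
    exact this


theorem pos_of_LAS (V : E → ℝ) (hV : ContDiff ℝ 2 V) (hV0 : V 0 = 0)
    (h : LAS (fun z : E => -gradient V z)) :
    ∃ ε > (0:ℝ), ∀ z : E, 0 < ‖z‖ → ‖z‖ < ε → 0 < V z ∧ gradient V z ≠ 0 := by
  obtain ⟨r, hr, hgr⟩ := grad_ne_near V h.2
  obtain ⟨δ, hδ, hδprop⟩ := h.1 (r/2) (by linarith)
  obtain ⟨τ, hτ, hPL⟩ := PL_step V hV hr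
  set δ' := min δ (r/2) with hδ'def
  have hδ'pos : 0 < δ' := lt_min hδ (by linarith)
  have hδ'r2 : δ' ≤ r/2 := min_le_right _ _
  have hδ'r : δ' < r := by
    have := min_le_right δ (r/2); linarith
  have hposV : ∀ z : E, 0 < ‖z‖ → ‖z‖ < δ' → 0 < V z := by
    by_contra hcon
    push_neg at hcon
    obtain ⟨z₁, hz₁pos, hz₁δ, hz₁V⟩ := hcon
    -- produce a point with strictly negative V
    obtain ⟨z, hVz, hzδ⟩ := exists_neg_V V hV hz₁V (hgr z₁ hz₁pos (by linarith)) hz₁δ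
    have hz0 : z ≠ 0 := fun h => by rw [h, hV0] at hVz; exact lt_irrefl 0 hVz
    -- invariant : within-solutions of arbitrary length starting at z
    have Pk : ∀ k : ℕ, ∃ y : ℝ → E, y 0 = z ∧
        ∀ t ∈ Icc 0 ((k+1)*τ), HasDerivWithinAt y (-(gradient V (y t)))
          (Icc 0 ((k+1)*τ)) t := by
      intro k
      induction k with
      | zero =>
        obtain ⟨φ, hφ0, hφd⟩ := hPL z (by linarith) 0
        refine ⟨φ, hφ0, ?_⟩
        have : ((0:ℕ)+1) * τ = 0 + τ := by push_cast; ring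
        rw [this]
        exact hφd
      | succ k ih =>
        obtain ⟨y, hy0, hyd⟩ := ih
        set S := ((k:ℝ)+1)*τ with hSdef
        have hSpos : 0 < S := by positivity
        obtain ⟨Y, hYeq, hYsol⟩ := convert_sol (F := fun w : E => -gradient V w) hSpos hyd
        have hY0 : Y 0 = z := by rw [hYeq 0 (left_mem_Icc.mpr hSpos.le), hy0]
        have hYnorm : ∀ t ∈ Icc (0:ℝ) S, ‖Y t‖ < r/2 := by
          apply hδprop S Y hYsol
          rw [hY0]
          exact lt_of_lt_of_le hzδ (min_le_left _ _)
        have hYS : ‖y S‖ ≤ r/2 := by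
          rw [← hYeq S (right_mem_Icc.mpr hSpos.le)]
          exact (hYnorm S (right_mem_Icc.mpr hSpos.le)).le
        obtain ⟨φ, hφ0, hφd⟩ := hPL (y S) hYS S
        have hglue := glue_sol (F := fun w : E => -gradient V w) hSpos.le
          (by linarith : S ≤ S + τ) hφ0 hyd hφd
        have harith : ((k:ℝ)+1+1) * τ = S + τ := by rw [hSdef]; ring
        refine ⟨fun t => if t ≤ S then y t else φ t, by simp [hSpos.le, hy0], ?_⟩
        push_cast
        rw [harith]
        exact hglue
    -- lower bound for V on the half ball
    obtain ⟨wM, _, hwMmin⟩ := (isCompact_closedBall (0:E) (r/2)).exists_isMinOn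
      ⟨0, mem_closedBall_self (by linarith)⟩ hV.continuous.continuousOn
    set M := V wM with hM
    -- the compact set where the trajectory lives, and the gradient bound there
    set K := Metric.closedBall (0:E) (r/2) ∩ {w | V w ≤ V z} with hK
    have hKc : IsCompact K := compact_inter _ (isClosed_le hV.continuous continuous_const)
    have hKne : K.Nonempty := ⟨z, mem_closedBall_zero_iff.mpr (by linarith), Set.mem_setOf.mpr le_rfl⟩
    obtain ⟨wK, hwK, hwKmin⟩ := hKc.exists_isMinOn hKne
      (((gradV_cont V hV).norm.pow 2).continuousOn)
    have hwK0 : wK ≠ 0 := by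
      intro h0
      have h2 : V wK ≤ V z := hwK.2
      rw [h0, hV0] at h2
      linarith
    have hμpos : 0 < ‖gradient V wK‖^2 := by
      have hne := hgr wK (norm_pos_iff.mpr hwK0)
        (lt_of_le_of_lt (mem_closedBall_zero_iff.mp hwK.1) (by linarith))
      have := norm_pos_iff.mpr hne
      positivity
    set μ := ‖gradient V wK‖^2 with hμ
    -- choose a long enough time
    obtain ⟨k, hk⟩ := exists_nat_gt ((V z - M) / (μ * τ))
    obtain ⟨y, hy0, hyd⟩ := Pk k
    set S := ((k:ℝ)+1)*τ with hSdef
    have hSpos : 0 < S := by positivity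
    obtain ⟨Y, hYeq, hYsol⟩ := convert_sol (F := fun w : E => -gradient V w) hSpos hyd
    have hY0 : Y 0 = z := by rw [hYeq 0 (left_mem_Icc.mpr hSpos.le), hy0]
    have hYnorm : ∀ t ∈ Icc (0:ℝ) S, ‖Y t‖ < r/2 := by
      apply hδprop S Y hYsol
      rw [hY0]
      exact lt_of_lt_of_le hzδ (min_le_left _ _)
    have hsol' : ∀ t ∈ Icc (0:ℝ) S, HasDerivAt Y (-(gradient V (Y t))) t := hYsol
    have hVdec : ∀ t ∈ Icc (0:ℝ) S, V (Y t) ≤ V z := by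
      intro t htmem
      have := antitoneV V hV hsol' (left_mem_Icc.mpr hSpos.le) htmem htmem.1
      simp only [hY0] at this
      exact this
    have hinK : ∀ t ∈ Icc (0:ℝ) S, Y t ∈ K := fun t htmem =>
      ⟨mem_closedBall_zero_iff.mpr (hYnorm t htmem).le, hVdec t htmem⟩
    have hdecay := decay V hV (μ := μ) hsol' (fun t htmem => hwKmin (hinK t htmem))
    have hfinal := hdecay (left_mem_Icc.mpr hSpos.le) (right_mem_Icc.mpr hSpos.le) hSpos.le
    simp only [mul_zero, add_zero, hY0] at hfinal
    have hMle : M ≤ V (Y S) := hwMmin (mem_closedBall_zero_iff.mpr (hYnorm S (right_mem_Icc.mpr hSpos.le)).le)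
    -- arithmetic contradiction
    have hμτ : 0 < μ * τ := by positivity
    rw [div_lt_iff₀ hμτ] at hk
    have : μ * S = ((k:ℝ)+1) * (μ * τ) := by rw [hSdef]; ring
    nlinarith [hk, hfinal, hMle]
  exact ⟨δ', hδ'pos, fun z h1 h2 => ⟨hposV z h1 h2, hgr z h1 (by linarith)⟩⟩

end LyapAux

theorem stmt3 {n : ℕ} (V : EuclideanSpace ℝ (Fin n) → ℝ)
    (hV : ContDiff ℝ 2 V) (hV0 : V 0 = 0) :
    LAS (fun z => -gradient V z) ↔
      ∃ ε > (0:ℝ), ∀ z : EuclideanSpace ℝ (Fin n),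
        0 < ‖z‖ → ‖z‖ < ε → 0 < V z ∧ gradient V z ≠ 0 := by
  constructor
  · exact fun h => pos_of_LAS V hV hV0 h
  · rintro ⟨ε, hε, hpos⟩
    exact ⟨stable_of_pos V hV hV0 hε (fun z a b => (hpos z a b).1),
           attractive_of_pos V hV hV0 hε hpos⟩
end
end

section
/- Let p : ℝⁿ → ℝ be a quartic form. Then the closed unit ball is invariant under the cubic vector field ẋ = −∇p(x) — that is, every solution x on any interval [0,T] with ‖x(0)‖ ≤ 1 satisfies ‖x(t)‖ ≤ 1 for all t ∈ [0,T] — if and only if p(x) ≥ 0 for all x ∈ ℝⁿ. -/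
noncomputable section

open Real Set Filter Topology InnerProductSpace

namespace Stmt6Aux

variable {n : ℕ}

lemma contDiff_mveval (P : MvPolynomial (Fin n) ℝ) :
    ContDiff ℝ ⊤ (fun x : Fin n → ℝ => MvPolynomial.eval x P) := by
  induction P using MvPolynomial.induction_on with
  | C a => simpa using contDiff_const (c := a)
  | add P Q hP hQ => simpa using hP.add hQ
  | mul_X P i hP =>
      simpa using hP.mul ((ContinuousLinearMap.proj i :
        (Fin n → ℝ) →L[ℝ] ℝ).contDiff)

lemma contDiff_of_hpoly (p : EuclideanSpace ℝ (Fin n) → ℝ)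
    (hpoly : ∃ P : MvPolynomial (Fin n) ℝ, ∀ x : EuclideanSpace ℝ (Fin n),
      p x = MvPolynomial.eval (x : Fin n → ℝ) P) : ContDiff ℝ ⊤ p := by
  obtain ⟨P, hP⟩ := hpoly
  have : p = (fun y : Fin n → ℝ => MvPolynomial.eval y P) ∘
      (EuclideanSpace.equiv (Fin n) ℝ : EuclideanSpace ℝ (Fin n) ≃L[ℝ] (Fin n → ℝ)) := by
    funext x; exact hP x
  rw [this]
  exact (contDiff_mveval P).comp (EuclideanSpace.equiv (Fin n) ℝ).contDiff

lemma inner_gradient (p : EuclideanSpace ℝ (Fin n) → ℝ) (z v : EuclideanSpace ℝ (Fin n)) :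
    ⟪gradient p z, v⟫_ℝ = fderiv ℝ p z v := by
  rw [gradient, InnerProductSpace.toDual_symm_apply]

lemma euler_id (p : EuclideanSpace ℝ (Fin n) → ℝ) (hp : ContDiff ℝ ⊤ p)
    (hhom : ∀ (lam : ℝ) (x : EuclideanSpace ℝ (Fin n)), p (lam • x) = lam ^ 4 * p x)
    (z : EuclideanSpace ℝ (Fin n)) :
    ⟪gradient p z, z⟫_ℝ = 4 * p z := by
  have hd' : HasFDerivAt p (fderiv ℝ p z) ((1:ℝ) • z) := by
    rw [one_smul]; exact (hp.differentiable (by simp) z).hasFDerivAt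
  have hc : HasDerivAt (fun l : ℝ => l • z) z 1 := by
    simpa using (hasDerivAt_id (1:ℝ)).smul_const z
  have h1 : HasDerivAt (fun l : ℝ => p (l • z)) (fderiv ℝ p z z) 1 :=
    hd'.comp_hasDerivAt 1 hc
  have h2 : HasDerivAt (fun l : ℝ => p (l • z)) (4 * p z) 1 := by
    have h : HasDerivAt (fun l : ℝ => l ^ 4 * p z) ((4 * (1:ℝ) ^ 3) * p z) 1 :=
      (hasDerivAt_pow 4 1).mul_const (p z)
    simp only [one_pow, mul_one] at h
    have he : (fun l : ℝ => p (l • z)) = fun l : ℝ => l ^ 4 * p z := by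
      funext l; exact hhom l z
    rw [he]; exact h
  rw [inner_gradient, h1.unique h2]

lemma contDiff_grad (p : EuclideanSpace ℝ (Fin n) → ℝ) (hp : ContDiff ℝ ⊤ p) :
    ContDiff ℝ 1 (fun z => -gradient p z) := by
  have hfd : ContDiff ℝ 1 (fderiv ℝ p) := hp.fderiv_right le_top
  have : ContDiff ℝ 1 (fun z => (InnerProductSpace.toDual ℝ
      (EuclideanSpace ℝ (Fin n))).symm (fderiv ℝ p z)) :=
    ((InnerProductSpace.toDual ℝ (EuclideanSpace ℝ (Fin n))).symm.contDiff).comp hfd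
  exact this.neg

/-- derivative of the squared norm along a solution -/
lemma sqnorm_deriv (p : EuclideanSpace ℝ (Fin n) → ℝ) (hp : ContDiff ℝ ⊤ p)
    (hhom : ∀ (lam : ℝ) (x : EuclideanSpace ℝ (Fin n)), p (lam • x) = lam ^ 4 * p x)
    {x : ℝ → EuclideanSpace ℝ (Fin n)} {s : ℝ}
    (hx : HasDerivAt x (-gradient p (x s)) s) :
    HasDerivAt (fun u => ⟪x u, x u⟫_ℝ) (-(8 * p (x s))) s := by
  have h := HasDerivAt.inner ℝ hx hx
  have e1 : ⟪x s, -gradient p (x s)⟫_ℝ + ⟪-gradient p (x s), x s⟫_ℝ = -(8 * p (x s)) := by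
    rw [inner_neg_left, inner_neg_right, real_inner_comm (gradient p (x s)) (x s),
      euler_id p hp hhom (x s)]
    ring
  rwa [e1] at h

end Stmt6Aux

open Stmt6Aux in
theorem stmt6 {n : ℕ} (p : EuclideanSpace ℝ (Fin n) → ℝ)
    (hpoly : ∃ P : MvPolynomial (Fin n) ℝ, ∀ x : EuclideanSpace ℝ (Fin n),
      p x = MvPolynomial.eval (x : Fin n → ℝ) P)
    (hhom : ∀ (lam : ℝ) (x : EuclideanSpace ℝ (Fin n)), p (lam • x) = lam ^ 4 * p x) :
    (∀ (T : ℝ) (x : ℝ → EuclideanSpace ℝ (Fin n)),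
        IsSolutionOn (fun z => -gradient p z) x (Set.Icc 0 T) →
        ‖x 0‖ ≤ 1 → ∀ t ∈ Set.Icc 0 T, ‖x t‖ ≤ 1) ↔
      ∀ x : EuclideanSpace ℝ (Fin n), 0 ≤ p x := by
  have hp : ContDiff ℝ ⊤ p := contDiff_of_hpoly p hpoly
  constructor
  · -- invariance → nonnegativity
    intro hinv x₀
    by_contra hneg
    push_neg at hneg
    have hx0 : x₀ ≠ 0 := by
      rintro rfl
      have h0 : p 0 = 0 := by simpa using hhom 0 0
      rw [h0] at hneg; exact absurd hneg (lt_irrefl 0)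
    set y : EuclideanSpace ℝ (Fin n) := ‖x₀‖⁻¹ • x₀ with hy
    have hnx : (0:ℝ) < ‖x₀‖ := norm_pos_iff.mpr hx0
    have hyn : ‖y‖ = 1 := by
      rw [hy, norm_smul, norm_inv, norm_norm, inv_mul_cancel₀ (ne_of_gt hnx)]
    have hpy : p y < 0 := by
      rw [hy, hhom]
      have : (0:ℝ) < ‖x₀‖⁻¹ ^ 4 := by positivity
      exact mul_neg_of_pos_of_neg this hneg
    -- local solution through y
    obtain ⟨f, hf0, ε, hε, hf⟩ :=
      ContDiffAt.exists_forall_mem_closedBall_exists_eq_forall_mem_Ioo_hasDerivAt₀ ((contDiff_grad p hp).contDiffAt (x := y)) (0:ℝ)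
    set g : ℝ → ℝ := fun u => ⟪f u, f u⟫_ℝ with hgdef
    have hg0 : g 0 = 1 := by
      rw [hgdef]; simp only [hf0, real_inner_self_eq_norm_sq, hyn]; norm_num
    have hgd : HasDerivAt g (-(8 * p y)) 0 := by
      have h0mem : (0:ℝ) ∈ Ioo (0 - ε) (0 + ε) := by constructor <;> linarith
      have := sqnorm_deriv p hp hhom (x := f) (s := 0) (by simpa using hf 0 h0mem)
      rwa [hf0] at this
    have hcpos : (0:ℝ) < -(8 * p y) := by linarith
    rw [hasDerivAt_iff_tendsto_slope] at hgd
    have hslope : ∀ᶠ t in 𝓝[>] (0:ℝ), 0 < slope g 0 t := by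
      have := hgd.eventually (lt_mem_nhds hcpos)
      exact (this.filter_mono (nhdsWithin_mono _ (fun a ha => ne_of_gt ha)))
    have hmem : Ioo (0:ℝ) ε ∈ 𝓝[>] (0:ℝ) :=
      Ioo_mem_nhdsGT_of_mem ⟨le_refl 0, hε⟩
    obtain ⟨t, hts, htIoo⟩ := (hslope.and (eventually_of_mem hmem fun a ha => ha)).exists
    have htpos : 0 < t := htIoo.1
    have hgt : 1 < g t := by
      have h1 : 0 < (g t - g 0) / (t - 0) := by rwa [slope_def_field] at hts
      rw [sub_zero] at h1
      have := (div_pos_iff.mp h1)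
      rcases this with ⟨h2, _⟩ | ⟨_, h3⟩
      · linarith [hg0 ▸ h2]
      · linarith
    -- f is a solution on Icc 0 t
    have hsol : IsSolutionOn (fun z => -gradient p z) f (Set.Icc 0 t) := by
      intro s hs
      exact hf s ⟨by linarith [hs.1], by linarith [hs.2, htIoo.2]⟩
    have hle := hinv t f hsol (by rw [hf0, hyn]) t ⟨le_of_lt htpos, le_refl t⟩
    have : g t = ‖f t‖ ^ 2 := real_inner_self_eq_norm_sq (f t)
    nlinarith [norm_nonneg (f t)]
  · -- nonnegativity → invariance
    intro hpos T x hsol h0 t ht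
    set g : ℝ → ℝ := fun u => ⟪x u, x u⟫_ℝ with hgdef
    have hg : ∀ s ∈ Set.Icc (0:ℝ) T, HasDerivAt g (-(8 * p (x s))) s := by
      intro s hs
      exact sqnorm_deriv p hp hhom (by simpa using hsol s hs)
    have hanti : AntitoneOn g (Set.Icc 0 T) := by
      apply antitoneOn_of_deriv_nonpos (convex_Icc 0 T)
      · exact fun s hs => (hg s hs).continuousAt.continuousWithinAt
      · intro s hs
        rw [interior_Icc] at hs
        exact ((hg s (Ioo_subset_Icc_self hs)).differentiableAt).differentiableWithinAt
      · intro s hs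
        rw [interior_Icc] at hs
        rw [(hg s (Ioo_subset_Icc_self hs)).deriv]
        have := hpos (x s)
        linarith
    have h0mem : (0:ℝ) ∈ Set.Icc (0:ℝ) T := ⟨le_refl 0, le_trans ht.1 ht.2⟩
    have hle : g t ≤ g 0 := hanti h0mem ht ht.1
    have hg0 : g 0 = ‖x 0‖ ^ 2 := real_inner_self_eq_norm_sq (x 0)
    have hgt : g t = ‖x t‖ ^ 2 := real_inner_self_eq_norm_sq (x t)
    nlinarith [norm_nonneg (x t), norm_nonneg (x 0)]
end
end

section
/- Let V : ℝⁿ → ℝ be a positive definite quartic form. Then the origin is locally asymptotically stable for the quartic vector field ẋ = −∇V(x) + x⁴, where x⁴ denotes the componentwise fourth power. -/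
noncomputable section

open Real Set Filter

/-- Componentwise fourth power on `ℝⁿ`. -/
def pow4 {n : ℕ} (x : EuclideanSpace ℝ (Fin n)) : EuclideanSpace ℝ (Fin n) :=
  WithLp.toLp 2 (fun i => x i ^ 4)

namespace Stmt13Aux

open InnerProductSpace RealInnerProductSpace

variable {n : ℕ}
local notation "E" => EuclideanSpace ℝ (Fin n)

lemma contDiff_of_poly (V : E → ℝ)
    (hpoly : ∃ P : MvPolynomial (Fin n) ℝ, ∀ x : E, V x = MvPolynomial.eval (x : Fin n → ℝ) P) :
    ContDiff ℝ ⊤ V := by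
  obtain ⟨P, hP⟩ := hpoly
  have hV : V = fun x : E => MvPolynomial.eval (x : Fin n → ℝ) P := funext hP
  rw [hV]; clear hV hP
  induction P using MvPolynomial.induction_on with
  | C a => simpa only [MvPolynomial.eval_C] using contDiff_const
  | add p q hp hq => simpa only [MvPolynomial.eval_add] using hp.add hq
  | mul_X p i hp =>
      simp only [MvPolynomial.eval_mul, MvPolynomial.eval_X]
      exact hp.mul (EuclideanSpace.proj (𝕜 := ℝ) i).contDiff

lemma inner_gradient (V : E → ℝ) (y v : E) :
    ⟪gradient V y, v⟫_ℝ = fderiv ℝ V y v :=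
  InnerProductSpace.toDual_symm_apply

lemma deriv_along (V : E → ℝ) (hd : Differentiable ℝ V) (x : ℝ → E) (t : ℝ) (v : E)
    (hx : HasDerivAt x v t) :
    HasDerivAt (fun s => V (x s)) (⟪gradient V (x t), v⟫_ℝ) t := by
  have h1 := (hd (x t)).hasFDerivAt.comp_hasDerivAt t hx
  rwa [inner_gradient V]

lemma euler (V : E → ℝ) (hd : Differentiable ℝ V)
    (hhom : ∀ (lam : ℝ) (x : E), V (lam • x) = lam ^ 4 * V x) (x : E) :
    ⟪gradient V x, x⟫_ℝ = 4 * V x := by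
  have hx : HasDerivAt (fun l : ℝ => l • x) x 1 := by
    simpa using (hasDerivAt_id (1 : ℝ)).smul_const x
  have h1 : HasDerivAt (fun l : ℝ => V (l • x)) (⟪gradient V ((1:ℝ) • x), x⟫_ℝ) 1 :=
    deriv_along V hd _ 1 x hx
  rw [one_smul] at h1
  have h2 : HasDerivAt (fun l : ℝ => V (l • x)) (4 * V x) 1 := by
    have he : (fun l : ℝ => V (l • x)) = fun l : ℝ => l ^ 4 * V x := funext fun l => hhom l x
    rw [he]
    simpa using (hasDerivAt_pow 4 (1 : ℝ)).mul_const (V x)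
  exact h1.unique h2

lemma gradient_homog_inner (V : E → ℝ) (hd : Differentiable ℝ V)
    (hhom : ∀ (lam : ℝ) (x : E), V (lam • x) = lam ^ 4 * V x) (lam : ℝ) (x v : E) :
    lam * ⟪gradient V (lam • x), v⟫_ℝ = lam ^ 4 * ⟪gradient V x, v⟫_ℝ := by
  have hsm : HasFDerivAt (fun y : E => lam • y) (lam • ContinuousLinearMap.id ℝ _) x :=
    (ContinuousLinearMap.id ℝ _).hasFDerivAt.const_smul lam
  have h1 : HasFDerivAt (fun y : E => V (lam • y))
      ((fderiv ℝ V (lam • x)).comp (lam • ContinuousLinearMap.id ℝ _)) x :=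
    (hd (lam • x)).hasFDerivAt.comp x hsm
  have h2 : HasFDerivAt (fun y : E => V (lam • y)) (lam ^ 4 • fderiv ℝ V x) x := by
    have he : (fun y : E => V (lam • y)) = fun y : E => lam ^ 4 * V y :=
      funext fun y => hhom lam y
    rw [he]
    exact (hd x).hasFDerivAt.const_mul (lam ^ 4)
  have h3 := h1.unique h2
  have h4 := congrArg (fun L : E →L[ℝ] ℝ => L v) h3
  simp only [ContinuousLinearMap.comp_apply, ContinuousLinearMap.smul_apply,
    ContinuousLinearMap.id_apply, map_smul, smul_eq_mul] at h4
  rw [inner_gradient, inner_gradient, h4]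

lemma gradient_homog (V : E → ℝ) (hd : Differentiable ℝ V)
    (hhom : ∀ (lam : ℝ) (x : E), V (lam • x) = lam ^ 4 * V x) {lam : ℝ} (hlam : lam ≠ 0)
    (x : E) : gradient V (lam • x) = lam ^ 3 • gradient V x := by
  apply ext_inner_right ℝ
  intro v
  have h := gradient_homog_inner V hd hhom lam x v
  have h2 : ⟪gradient V (lam • x), v⟫_ℝ = lam ^ 3 * ⟪gradient V x, v⟫_ℝ :=
    mul_left_cancel₀ hlam (by rw [h]; ring)
  rw [h2, real_inner_smul_left]

lemma gradient_zero (V : E → ℝ) (hd : Differentiable ℝ V)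
    (hhom : ∀ (lam : ℝ) (x : E), V (lam • x) = lam ^ 4 * V x) :
    gradient V 0 = 0 := by
  have h := gradient_homog V hd hhom (lam := 2) two_ne_zero 0
  rw [smul_zero] at h
  have h2 : (1 - (2:ℝ)^3) • gradient V 0 = 0 := by
    rw [sub_smul, one_smul, ← h, sub_self]
  rcases smul_eq_zero.mp h2 with h' | h'
  · norm_num at h'
  · exact h'

lemma V_zero (V : E → ℝ)
    (hhom : ∀ (lam : ℝ) (x : E), V (lam • x) = lam ^ 4 * V x) : V 0 = 0 := by
  simpa using hhom 0 0

lemma sum_pow_four_le {m : ℕ} (a : Fin m → ℝ) (ha : ∀ i, 0 ≤ a i) :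
    ∑ i, (a i) ^ 4 ≤ (∑ i, a i) ^ 4 := by
  calc ∑ i, (a i) ^ 4 ≤ ∑ i, (∑ j, a j) ^ 3 * a i := by
        apply Finset.sum_le_sum
        intro i _
        have hi : a i ≤ ∑ j, a j := Finset.single_le_sum (fun j _ => ha j) (Finset.mem_univ i)
        calc (a i) ^ 4 = (a i) ^ 3 * a i := by ring
          _ ≤ (∑ j, a j) ^ 3 * a i :=
            mul_le_mul_of_nonneg_right (pow_le_pow_left₀ (ha i) hi 3) (ha i)
    _ = (∑ i, a i) ^ 4 := by rw [← Finset.mul_sum]; ring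

lemma norm_pow4_le (x : E) : ‖pow4 x‖ ≤ ‖x‖ ^ 4 := by
  have hS : 0 ≤ ∑ i, x i ^ 2 := Finset.sum_nonneg fun i _ => sq_nonneg _
  have h1 : ‖pow4 x‖ = Real.sqrt (∑ i, (x i ^ 2) ^ 4) := by
    rw [EuclideanSpace.norm_eq]
    congr 1
    apply Finset.sum_congr rfl
    intro i _
    have h : pow4 x i = x i ^ 4 := rfl
    rw [h, Real.norm_eq_abs, sq_abs]
    ring
  have h2 : ‖x‖ ^ 4 = (∑ i, x i ^ 2) ^ 2 := by
    rw [EuclideanSpace.norm_eq]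
    have h : ∑ i, ‖x i‖ ^ 2 = ∑ i, x i ^ 2 := by
      apply Finset.sum_congr rfl; intro i _; rw [Real.norm_eq_abs, sq_abs]
    rw [h, show (4:ℕ) = 2*2 from rfl, pow_mul, Real.sq_sqrt hS]
  rw [h1, h2]
  calc Real.sqrt (∑ i, (x i ^ 2) ^ 4) ≤ Real.sqrt ((∑ i, x i ^ 2) ^ 4) :=
        Real.sqrt_le_sqrt (sum_pow_four_le _ fun i => sq_nonneg _)
    _ = (∑ i, x i ^ 2) ^ 2 := by
        rw [show (4:ℕ) = 2*2 from rfl, pow_mul, Real.sqrt_sq (by positivity)]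

lemma continuous_gradient (V : E → ℝ) (hsm : ContDiff ℝ ⊤ V) :
    Continuous (gradient V) := by
  have h : Continuous (fderiv ℝ V) := hsm.continuous_fderiv (by simp)
  exact (InnerProductSpace.toDual ℝ _).symm.continuous.comp h

lemma key_bounds (hn : 0 < n) (V : E → ℝ) (hsm : ContDiff ℝ ⊤ V)
    (hhom : ∀ (lam : ℝ) (x : E), V (lam • x) = lam ^ 4 * V x)
    (hpos : ∀ x : E, x ≠ 0 → 0 < V x) :
    ∃ a c r : ℝ, 0 < a ∧ 0 < c ∧ 0 < r ∧
      (∀ x : E, a * ‖x‖ ^ 4 ≤ V x) ∧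
      (∀ x : E, ‖x‖ ≤ r → ⟪gradient V x, -gradient V x + pow4 x⟫_ℝ ≤ -(c * ‖x‖ ^ 6)) := by
  have hd : Differentiable ℝ V := hsm.differentiable (by simp)
  have hcs : IsCompact (Metric.sphere (0:E) 1) := isCompact_sphere 0 1
  have hne : (Metric.sphere (0:E) 1).Nonempty := by
    refine ⟨EuclideanSpace.single ⟨0, hn⟩ (1:ℝ), ?_⟩
    simp [EuclideanSpace.norm_single]
  obtain ⟨umin, humin, hmin⟩ := hcs.exists_isMinOn hne hsm.continuous.continuousOn
  obtain ⟨ug, hug, hgmin⟩ := hcs.exists_isMinOn hne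
    ((continuous_gradient V hsm).norm.continuousOn)
  obtain ⟨uM, huM, hgmax⟩ := hcs.exists_isMaxOn hne
    ((continuous_gradient V hsm).norm.continuousOn)
  set a := V umin with ha_def
  set c0 := ‖gradient V ug‖ with hc0_def
  set M := ‖gradient V uM‖ with hM_def
  have ha : 0 < a := hpos umin (by intro h; rw [h] at humin; simp at humin)
  have hc0 : 0 < c0 := by
    rcases (norm_nonneg (gradient V ug)).lt_or_eq with h | h
    · exact h
    · exfalso
      have hg0 : gradient V ug = 0 := by
        rw [← norm_eq_zero]; exact h.symm ▸ rfl
      have he := euler V hd hhom ug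
      rw [hg0] at he
      simp at he
      have := hpos ug (by intro h'; rw [h'] at hug; simp at hug)
      linarith
  have hVlow : ∀ x : E, a * ‖x‖ ^ 4 ≤ V x := by
    intro x
    rcases eq_or_ne x 0 with rfl | hx
    · simp [V_zero V hhom]
    · have hnx : (0:ℝ) < ‖x‖ := norm_pos_iff.mpr hx
      set u : E := ‖x‖⁻¹ • x with hu_def
      have hu : u ∈ Metric.sphere (0:E) 1 := by
        rw [mem_sphere_zero_iff_norm, hu_def, norm_smul]
        simp [abs_of_pos (inv_pos.mpr hnx), inv_mul_cancel₀ (ne_of_gt hnx)]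
      have hxu : x = ‖x‖ • u := by
        rw [hu_def, smul_smul, mul_inv_cancel₀ (ne_of_gt hnx), one_smul]
      have hVx : V x = ‖x‖ ^ 4 * V u := by
        rw [hxu, hhom, ← hxu]
      rw [hVx]
      have h2 : a ≤ V u := hmin hu
      nlinarith [pow_pos hnx 4]
  have hglow : ∀ x : E, c0 * ‖x‖ ^ 3 ≤ ‖gradient V x‖ := by
    intro x
    rcases eq_or_ne x 0 with rfl | hx
    · simp
    · have hnx : (0:ℝ) < ‖x‖ := norm_pos_iff.mpr hx
      set u : E := ‖x‖⁻¹ • x with hu_def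
      have hu : u ∈ Metric.sphere (0:E) 1 := by
        rw [mem_sphere_zero_iff_norm, hu_def, norm_smul]
        simp [abs_of_pos (inv_pos.mpr hnx), inv_mul_cancel₀ (ne_of_gt hnx)]
      have hxu : x = ‖x‖ • u := by
        rw [hu_def, smul_smul, mul_inv_cancel₀ (ne_of_gt hnx), one_smul]
      have h1 : gradient V x = ‖x‖ ^ 3 • gradient V u := by
        have h := gradient_homog V hd hhom (ne_of_gt hnx) u
        rw [← hxu] at h; exact h
      rw [h1, norm_smul]
      have h2 : c0 ≤ ‖gradient V u‖ := hgmin hu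
      have h3 : ‖(‖x‖ ^ 3 : ℝ)‖ = ‖x‖ ^ 3 := by
        rw [Real.norm_eq_abs, abs_of_nonneg (by positivity)]
      rw [h3]
      nlinarith [pow_pos hnx 3]
  have hghigh : ∀ x : E, ‖gradient V x‖ ≤ M * ‖x‖ ^ 3 := by
    intro x
    rcases eq_or_ne x 0 with rfl | hx
    · simp [gradient_zero V hd hhom]
    · have hnx : (0:ℝ) < ‖x‖ := norm_pos_iff.mpr hx
      set u : E := ‖x‖⁻¹ • x with hu_def
      have hu : u ∈ Metric.sphere (0:E) 1 := by
        rw [mem_sphere_zero_iff_norm, hu_def, norm_smul]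
        simp [abs_of_pos (inv_pos.mpr hnx), inv_mul_cancel₀ (ne_of_gt hnx)]
      have hxu : x = ‖x‖ • u := by
        rw [hu_def, smul_smul, mul_inv_cancel₀ (ne_of_gt hnx), one_smul]
      have h1 : gradient V x = ‖x‖ ^ 3 • gradient V u := by
        have h := gradient_homog V hd hhom (ne_of_gt hnx) u
        rw [← hxu] at h; exact h
      rw [h1, norm_smul]
      have h2 : ‖gradient V u‖ ≤ M := hgmax hu
      have h3 : ‖(‖x‖ ^ 3 : ℝ)‖ = ‖x‖ ^ 3 := by
        rw [Real.norm_eq_abs, abs_of_nonneg (by positivity)]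
      rw [h3]
      nlinarith [pow_pos hnx 3]
  refine ⟨a, c0 ^ 2 / 2, min 1 (c0 ^ 2 / (2 * (M + 1))), ha, by positivity, ?_, hVlow, ?_⟩
  · have hM0 : 0 ≤ M := le_trans (norm_nonneg _) (hgmax hug)
    positivity
  · intro x hx
    have hM0 : 0 ≤ M := le_trans (norm_nonneg _) (hgmax hug)
    have hxnn : (0:ℝ) ≤ ‖x‖ := norm_nonneg _
    have hinner : ⟪gradient V x, -gradient V x + pow4 x⟫_ℝ =
        -‖gradient V x‖ ^ 2 + ⟪gradient V x, pow4 x⟫_ℝ := by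
      rw [inner_add_right, inner_neg_right, real_inner_self_eq_norm_sq]
    have hcs2 : ⟪gradient V x, pow4 x⟫_ℝ ≤ ‖gradient V x‖ * ‖pow4 x‖ :=
      real_inner_le_norm _ _
    have hp4 : ‖pow4 x‖ ≤ ‖x‖ ^ 4 := norm_pow4_le x
    have hg1 : c0 * ‖x‖ ^ 3 ≤ ‖gradient V x‖ := hglow x
    have hg2 : ‖gradient V x‖ ≤ M * ‖x‖ ^ 3 := hghigh x
    have h6 : (c0 * ‖x‖ ^ 3) ^ 2 ≤ ‖gradient V x‖ ^ 2 :=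
      pow_le_pow_left₀ (by positivity) hg1 2
    have hip : ⟪gradient V x, pow4 x⟫_ℝ ≤ M * ‖x‖ ^ 7 := by
      calc ⟪gradient V x, pow4 x⟫_ℝ ≤ ‖gradient V x‖ * ‖pow4 x‖ := hcs2
        _ ≤ (M * ‖x‖ ^ 3) * ‖x‖ ^ 4 :=
            mul_le_mul hg2 hp4 (norm_nonneg _) (by positivity)
        _ = M * ‖x‖ ^ 7 := by ring
    have hxr : ‖x‖ ≤ c0 ^ 2 / (2 * (M + 1)) := le_trans hx (min_le_right _ _)
    have hmx : M * ‖x‖ ^ 7 ≤ (c0 ^ 2 / 2) * ‖x‖ ^ 6 := by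
      have h7 : M * ‖x‖ ^ 7 = (M * ‖x‖) * ‖x‖ ^ 6 := by ring
      rw [h7]
      apply mul_le_mul_of_nonneg_right _ (by positivity)
      calc M * ‖x‖ ≤ M * (c0 ^ 2 / (2 * (M + 1))) := mul_le_mul_of_nonneg_left hxr hM0
        _ ≤ c0 ^ 2 / 2 := by
            rw [← mul_div_assoc, div_le_div_iff₀ (by positivity) (by norm_num)]
            nlinarith [sq_nonneg c0, hM0]
    calc ⟪gradient V x, -gradient V x + pow4 x⟫_ℝ
        = -‖gradient V x‖ ^ 2 + ⟪gradient V x, pow4 x⟫_ℝ := hinner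
      _ ≤ -(c0 * ‖x‖ ^ 3) ^ 2 + M * ‖x‖ ^ 7 := by linarith
      _ ≤ -(c0 * ‖x‖ ^ 3) ^ 2 + (c0 ^ 2 / 2) * ‖x‖ ^ 6 := by linarith
      _ = -(c0 ^ 2 / 2 * ‖x‖ ^ 6) := by ring

lemma trapping (V : E → ℝ) (hd : Differentiable ℝ V)
    {a r : ℝ} (ha : 0 < a)
    (H1 : ∀ x : E, a * ‖x‖ ^ 4 ≤ V x)
    (H3 : ∀ x : E, ‖x‖ ≤ r → ⟪gradient V x, -gradient V x + pow4 x⟫_ℝ ≤ 0)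
    (x : ℝ → E) (t₀ T : ℝ)
    (hsol : ∀ t ∈ Icc t₀ T, HasDerivAt x (-gradient V (x t) + pow4 (x t)) t)
    {ε : ℝ} (hε0 : 0 < ε) (hεr : ε ≤ r) (h0 : V (x t₀) < a * ε ^ 4) :
    ∀ t ∈ Icc t₀ T, V (x t) < a * ε ^ 4 := by
  by_contra hcon
  push_neg at hcon
  obtain ⟨s₀, hs₀mem, hs₀⟩ := hcon
  set g : ℝ → ℝ := fun t => V (x t) with hg_def
  have hg' : ∀ t ∈ Icc t₀ T,
      HasDerivAt g (⟪gradient V (x t), -gradient V (x t) + pow4 (x t)⟫_ℝ) t :=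
    fun t ht => deriv_along V hd x t _ (hsol t ht)
  set A : Set ℝ := {t | t ∈ Icc t₀ T ∧ a * ε ^ 4 ≤ g t} with hA_def
  have hAne : A.Nonempty := ⟨s₀, hs₀mem, hs₀⟩
  have hbdd : BddBelow A := ⟨t₀, fun s hs => hs.1.1⟩
  set t₁ := sInf A with ht₁_def
  have ht₁0 : t₀ ≤ t₁ := le_csInf hAne fun s hs => hs.1.1
  have ht₁T : t₁ ≤ T := le_trans (csInf_le hbdd hAne.choose_spec) hAne.choose_spec.1.2
  have ht₁mem : t₁ ∈ Icc t₀ T := ⟨ht₁0, ht₁T⟩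
  have hgt₁ : a * ε ^ 4 ≤ g t₁ := by
    by_contra hlt
    push_neg at hlt
    have hca : ContinuousAt g t₁ := (hg' t₁ ht₁mem).continuousAt
    have hev : ∀ᶠ s in nhds t₁, g s < a * ε ^ 4 :=
      hca.eventually_lt continuousAt_const hlt
    obtain ⟨η, hη, hball⟩ := Metric.eventually_nhds_iff.mp hev
    obtain ⟨s, hsA, hs⟩ := (csInf_lt_iff hbdd hAne).mp
      (show sInf A < t₁ + η by rw [← ht₁_def]; linarith)
    have hst : t₁ ≤ s := csInf_le hbdd hsA
    have hd' : dist s t₁ < η := by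
      rw [Real.dist_eq, abs_of_nonneg (by linarith)]; linarith
    exact absurd hsA.2 (not_le.mpr (hball hd'))
  have ht₀lt : t₀ < t₁ := by
    rcases lt_or_eq_of_le ht₁0 with h | h
    · exact h
    · exfalso; rw [← h] at hgt₁; exact absurd h0 (not_lt.mpr hgt₁)
  have hsmall : ∀ s ∈ Ico t₀ t₁, ‖x s‖ ≤ r := by
    intro s hs
    have hsnotA : s ∉ A := fun hmem => absurd (csInf_le hbdd hmem) (not_le.mpr hs.2)
    have hsIcc : s ∈ Icc t₀ T := ⟨hs.1, le_trans hs.2.le ht₁T⟩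
    have hgs : g s < a * ε ^ 4 := by
      by_contra h'; exact hsnotA ⟨hsIcc, le_of_not_gt h'⟩
    have h1 : a * ‖x s‖ ^ 4 ≤ g s := H1 (x s)
    have h2 : ‖x s‖ ^ 4 < ε ^ 4 := by nlinarith
    have := lt_of_pow_lt_pow_left₀ 4 (le_of_lt hε0) h2
    linarith
  have hanti : AntitoneOn g (Icc t₀ t₁) := by
    apply antitoneOn_of_deriv_nonpos (convex_Icc t₀ t₁)
    · intro s hs
      exact ((hg' s ⟨hs.1, le_trans hs.2 ht₁T⟩).continuousAt).continuousWithinAt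
    · intro s hs
      rw [interior_Icc] at hs
      exact ((hg' s ⟨hs.1.le, le_trans hs.2.le ht₁T⟩).differentiableAt).differentiableWithinAt
    · intro s hs
      rw [interior_Icc] at hs
      rw [(hg' s ⟨hs.1.le, le_trans hs.2.le ht₁T⟩).deriv]
      exact H3 (x s) (hsmall s ⟨hs.1.le, hs.2⟩)
  have hle : g t₁ ≤ g t₀ := hanti (left_mem_Icc.mpr ht₁0) (right_mem_Icc.mpr ht₁0) ht₁0
  exact absurd hgt₁ (not_le.mpr (lt_of_le_of_lt hle h0))

end Stmt13Aux

open Stmt13Aux InnerProductSpace in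
theorem stmt13 {n : ℕ} (V : EuclideanSpace ℝ (Fin n) → ℝ)
    (hpoly : ∃ P : MvPolynomial (Fin n) ℝ, ∀ x : EuclideanSpace ℝ (Fin n),
      V x = MvPolynomial.eval (x : Fin n → ℝ) P)
    (hhom : ∀ (lam : ℝ) (x : EuclideanSpace ℝ (Fin n)), V (lam • x) = lam ^ 4 * V x)
    (hpos : ∀ x : EuclideanSpace ℝ (Fin n), x ≠ 0 → 0 < V x) :
    LAS (fun x => -gradient V x + pow4 x) := by
  rcases Nat.eq_zero_or_pos n with hn | hn
  · -- trivial case n = 0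
    subst hn
    haveI hss : Subsingleton (EuclideanSpace ℝ (Fin 0)) :=
      ⟨fun a b => by ext i; exact i.elim0⟩
    constructor
    · intro ε hε
      refine ⟨1, one_pos, fun T x _ _ t _ => ?_⟩
      rw [Subsingleton.elim (x t) 0, norm_zero]
      exact hε
    · refine ⟨1, one_pos, fun x _ _ => ?_⟩
      have hx : x = fun _ => (0 : EuclideanSpace ℝ (Fin 0)) :=
        funext fun t => Subsingleton.elim _ _
      rw [hx]
      exact tendsto_const_nhds
  · have hsm : ContDiff ℝ ⊤ V := contDiff_of_poly V hpoly
    have hd : Differentiable ℝ V := hsm.differentiable (by simp)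
    obtain ⟨a, c, r, ha, hc, hr, H1, H3⟩ := key_bounds hn V hsm hhom hpos
    have H3' : ∀ x : EuclideanSpace ℝ (Fin n), ‖x‖ ≤ r →
        ⟪gradient V x, -gradient V x + pow4 x⟫_ℝ ≤ 0 := by
      intro x hx
      have := H3 x hx
      nlinarith [pow_nonneg (norm_nonneg x) 6]
    have hV0 : V 0 = 0 := V_zero V hhom
    -- small norm from small V
    have hVtoNorm : ∀ (y : EuclideanSpace ℝ (Fin n)) (ε : ℝ), 0 < ε →
        V y < a * ε ^ 4 → ‖y‖ < ε := by
      intro y ε hε hy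
      have h1 : a * ‖y‖ ^ 4 ≤ V y := H1 y
      have h2 : ‖y‖ ^ 4 < ε ^ 4 := by nlinarith
      exact lt_of_pow_lt_pow_left₀ 4 (le_of_lt hε) h2
    -- continuity-based δ for a given target level
    have hδ : ∀ ε : ℝ, 0 < ε → ∃ δ > (0:ℝ),
        ∀ y : EuclideanSpace ℝ (Fin n), ‖y‖ < δ → V y < a * ε ^ 4 := by
      intro ε hε
      have hev : ∀ᶠ y in nhds (0 : EuclideanSpace ℝ (Fin n)), V y < a * ε ^ 4 :=
        (hsm.continuous.continuousAt).eventually_lt continuousAt_const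
          (by rw [hV0]; positivity)
      obtain ⟨δ, hδ0, hball⟩ := Metric.eventually_nhds_iff.mp hev
      exact ⟨δ, hδ0, fun y hy => hball (by rwa [dist_zero_right])⟩
    constructor
    · -- Lyapunov stability
      intro ε hε
      set ε₁ := min ε r with hε₁_def
      have hε₁ : 0 < ε₁ := lt_min hε hr
      obtain ⟨δ, hδ0, hball⟩ := hδ ε₁ hε₁
      refine ⟨δ, hδ0, fun T x hsol hx0 t ht => ?_⟩
      have h0 : V (x 0) < a * ε₁ ^ 4 := hball _ hx0
      have htr := trapping V hd ha H1 H3' x 0 T hsol hε₁ (min_le_right ε r) h0 t ht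
      exact lt_of_lt_of_le (hVtoNorm _ _ hε₁ htr) (min_le_left ε r)
    · -- local attractivity
      obtain ⟨δ, hδ0, hball⟩ := hδ r hr
      refine ⟨δ, hδ0, fun x hsol hx0 => ?_⟩
      have h0 : V (x 0) < a * r ^ 4 := hball _ hx0
      have htrap : ∀ t : ℝ, 0 ≤ t → V (x t) < a * r ^ 4 := by
        intro t ht
        exact trapping V hd ha H1 H3' x 0 t (fun s hs => hsol s hs.1) hr le_rfl h0 t
          ⟨ht, le_rfl⟩
      have hxr : ∀ t : ℝ, 0 ≤ t → ‖x t‖ < r := fun t ht => hVtoNorm _ _ hr (htrap t ht)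
      rw [Metric.tendsto_atTop]
      intro ε hε
      set ε₂ := min ε r with hε₂_def
      have hε₂ : 0 < ε₂ := lt_min hε hr
      obtain ⟨ε₃, hε₃0, hball₃⟩ := hδ ε₂ hε₂
      -- find a time t₀ ≥ 0 with ‖x t₀‖ < ε₃
      have ht₀ : ∃ t₀ : ℝ, 0 ≤ t₀ ∧ ‖x t₀‖ < ε₃ := by
        by_contra hno
        push_neg at hno
        set K := c * ε₃ ^ 6 with hK_def
        have hK : 0 < K := by positivity
        set T := (V (x 0) + 1) / K with hT_def
        have hV00 : 0 ≤ V (x 0) := le_trans (by positivity) (H1 (x 0))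
        have hT0 : 0 < T := by positivity
        set φ : ℝ → ℝ := fun t => V (x t) + K * t with hφ_def
        have hφ' : ∀ t ∈ Icc (0:ℝ) T, HasDerivAt φ
            (⟪gradient V (x t), -gradient V (x t) + pow4 (x t)⟫_ℝ + K) t := by
          intro t ht
          exact (deriv_along V hd x t _ (hsol t ht.1)).add
            (by simpa using (hasDerivAt_id t).const_mul K)
        have hφanti : AntitoneOn φ (Icc 0 T) := by
          apply antitoneOn_of_deriv_nonpos (convex_Icc 0 T)
          · intro s hs
            exact ((hφ' s hs).continuousAt).continuousWithinAt
          · intro s hs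
            rw [interior_Icc] at hs
            exact ((hφ' s ⟨hs.1.le, hs.2.le⟩).differentiableAt).differentiableWithinAt
          · intro s hs
            rw [interior_Icc] at hs
            rw [(hφ' s ⟨hs.1.le, hs.2.le⟩).deriv]
            have h1 := H3 (x s) (le_of_lt (hxr s hs.1.le))
            have h2 : ε₃ ^ 6 ≤ ‖x s‖ ^ 6 :=
              pow_le_pow_left₀ (le_of_lt hε₃0) (hno s hs.1.le) 6
            have h3 : K ≤ c * ‖x s‖ ^ 6 := by
              rw [hK_def]; exact mul_le_mul_of_nonneg_left h2 (le_of_lt hc)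
            linarith
        have hφ0 : φ T ≤ φ 0 := hφanti (left_mem_Icc.mpr hT0.le)
          (right_mem_Icc.mpr hT0.le) hT0.le
        have hKT : K * T = V (x 0) + 1 := by
          rw [hT_def, mul_div_cancel₀ _ (ne_of_gt hK)]
        have hVT : 0 ≤ V (x T) := le_trans (by positivity) (H1 (x T))
        simp only [hφ_def] at hφ0
        rw [hKT] at hφ0
        simp at hφ0
        linarith
      obtain ⟨t₀, ht₀0, ht₀ε₃⟩ := ht₀
      have hVt₀ : V (x t₀) < a * ε₂ ^ 4 := hball₃ _ ht₀ε₃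
      refine ⟨t₀, fun t ht => ?_⟩
      have htr : V (x t) < a * ε₂ ^ 4 := by
        refine trapping V hd ha H1 H3' x t₀ t
          (fun s hs => hsol s (le_trans ht₀0 hs.1)) hε₂ (min_le_right ε r) hVt₀ t ⟨ht, le_rfl⟩
      rw [dist_zero_right]
      exact lt_of_lt_of_le (hVtoNorm _ _ hε₂ htr) (min_le_left ε r)
end
end
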